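/- arXiv:1607.05610 — 5 statements merged into one kernel-verified Lean document; each statement's English description precedes it below -/
import Mathlib

section
/- Let I be an ideal on ω. Then (a) every member of the homogeneity family H(I) is I-positive, i.e. H(I) ⊆ I⁺; and (b) if additionally I is admissible, then every set in the dual filter belongs to the homogeneity family, i.e. I* ⊆ H(I). -/
open Set Filter

/-- `I` is an ideal on the countable set `X`: closed under subsets and finite
unions, contains all finite sets, and does not contain the whole set. -/
def IsIdeal {X : Type*} (I : Set (Set X)) : Prop :=
  (∀ A B : Set X, A ∈ I → B ⊆ A → B ∈ I) ∧
  (∀ A B : Set X, A ∈ I → B ∈ I → A ∪ B ∈ I) ∧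
  (∀ A : Set X, A.Finite → A ∈ I) ∧
  (Set.univ : Set X) ∉ I

/-- The restriction `I|A = {B ∩ A : B ∈ I}`. -/
def restr {X : Type*} (I : Set (Set X)) (A : Set X) : Set (Set X) :=
  {C | ∃ B ∈ I, C = B ∩ A}

/-- `I|A ≅ I|B`: there is a bijection `f : B → A` such that for every
`C ⊆ A`, `C ∈ I|A ↔ f⁻¹[C] ∈ I|B`. -/
def RIso {X : Type*} (I : Set (Set X)) (A B : Set X) : Prop :=
  ∃ f : X → X, Set.BijOn f B A ∧
    ∀ C : Set X, C ⊆ A → (C ∈ restr I A ↔ B ∩ f ⁻¹' C ∈ restr I B)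

/-- The homogeneity family `H(I) = {A : I|A ≅ I}`. -/
def HF {X : Type*} (I : Set (Set X)) : Set (Set X) := {A | RIso I A Set.univ}

/-- `I` is homogeneous if `H(I) = I⁺`. -/
def HomogIdeal {X : Type*} (I : Set (Set X)) : Prop := HF I = {A | A ∉ I}

/-- `I` is anti-homogeneous if `H(I) = I*`. -/
def AntiHomogIdeal {X : Type*} (I : Set (Set X)) : Prop := HF I = {A | Aᶜ ∈ I}

/-- `I ≅ J`: a bijection `f` of underlying sets with `A ∈ I ↔ f⁻¹[A] ∈ J`. -/
def Isomorphic {X Y : Type*} (I : Set (Set X)) (J : Set (Set Y)) : Prop :=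
  ∃ f : Y → X, Function.Bijective f ∧ ∀ A : Set X, A ∈ I ↔ f ⁻¹' A ∈ J

/-- The ideal `Fin ⊕ P(ω)` on `{0,1} × ω` (here `Bool × ℕ`, `true` playing the
role of `1`): all sets `A` with `{n : (1,n) ∈ A}` finite. -/
def FinOplusAll : Set (Set (Bool × ℕ)) := {A | {n : ℕ | (true, n) ∈ A}.Finite}

/-- An ideal on `ω` is admissible if it is not isomorphic to `Fin ⊕ P(ω)`. -/
def Admissible (I : Set (Set ℕ)) : Prop := ¬ Isomorphic I FinOplusAll

/-- An injection `f` is bi-`I`-invariant if `f[A] ∈ I ↔ A ∈ I` for all `A`. -/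
def BiInvariant {X : Type*} (I : Set (Set X)) (f : X → X) : Prop :=
  Function.Injective f ∧ ∀ A : Set X, f '' A ∈ I ↔ A ∈ I

/-- The set of fixed points of `f`. -/
def fixedSet {X : Type*} (f : X → X) : Set X := {x | f x = x}

/-- `I` is a maximal ideal. -/
def MaximalIdeal {X : Type*} (I : Set (Set X)) : Prop :=
  IsIdeal I ∧ ∀ A : Set X, A ∈ I ∨ Aᶜ ∈ I

-- auxiliary lemmas

lemma mem_restr_univ {X : Type*} (I : Set (Set X)) (C : Set X) :
    C ∈ restr I Set.univ ↔ C ∈ I := by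
  constructor
  · rintro ⟨B, hB, rfl⟩; simpa using hB
  · intro h; exact ⟨C, h, (Set.inter_univ C).symm⟩

lemma mem_restr_self {X : Type*} {I : Set (Set X)} (hI : IsIdeal I) {A C : Set X}
    (hC : C ⊆ A) : C ∈ restr I A ↔ C ∈ I := by
  constructor
  · rintro ⟨B, hB, rfl⟩; exact hI.1 B _ hB Set.inter_subset_left
  · intro h; exact ⟨C, h, (Set.inter_eq_left.mpr hC).symm⟩

lemma mem_HF_of {I : Set (Set ℕ)} (hI : IsIdeal I) {A : Set ℕ} (f : ℕ → ℕ)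
    (hbij : Set.BijOn f Set.univ A)
    (h : ∀ C : Set ℕ, C ⊆ A → (C ∈ I ↔ f ⁻¹' C ∈ I)) : A ∈ HF I := by
  refine ⟨f, hbij, fun C hC => ?_⟩
  rw [mem_restr_self hI hC, Set.univ_inter, mem_restr_univ]
  exact h C hC

lemma case1 {I : Set (Set ℕ)} (hI : IsIdeal I) {A D : Set ℕ} (hAc : Aᶜ ∈ I)
    (hD : D ⊆ A) (hDI : D ∈ I) (hinf : D.Infinite) : A ∈ HF I := by
  classical
  set S : Set ℕ := D ∪ Aᶜ with hS
  have hSinf : S.Infinite := hinf.mono Set.subset_union_left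
  have hSI : S ∈ I := hI.2.1 _ _ hDI hAc
  have hne : Nonempty (↥S ≃ ↥D) := by
    have i1 : Infinite ↥S := hSinf.to_subtype
    have i2 : Infinite ↥D := hinf.to_subtype
    obtain ⟨d1⟩ := nonempty_denumerable ↥S
    obtain ⟨d2⟩ := nonempty_denumerable ↥D
    exact ⟨(@Denumerable.eqv _ d1).trans (@Denumerable.eqv _ d2).symm⟩
  obtain ⟨e⟩ := hne
  set f : ℕ → ℕ := fun x => if h : x ∈ S then (e ⟨x, h⟩ : ℕ) else x with hf
  have hfS : ∀ x (h : x ∈ S), f x = (e ⟨x, h⟩ : ℕ) := by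
    intro x h; simp [hf, h]
  have hfid : ∀ x, x ∉ S → f x = x := by
    intro x h; simp [hf, h]
  have hcompl : ∀ x, x ∉ S → x ∈ A \ D := by
    intro x h
    rw [hS, Set.mem_union, not_or, Set.mem_compl_iff, not_not] at h
    exact ⟨h.2, h.1⟩
  have hbij : Set.BijOn f Set.univ A := by
    refine ⟨?_, ?_, ?_⟩
    · intro x _
      by_cases h : x ∈ S
      · rw [hfS x h]; exact hD (e ⟨x, h⟩).2
      · rw [hfid x h]; exact (hcompl x h).1
    · intro x _ y _ hxy
      by_cases hx : x ∈ S <;> by_cases hy : y ∈ S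
      · rw [hfS x hx, hfS y hy] at hxy
        have := e.injective (Subtype.ext hxy)
        exact congrArg Subtype.val this
      · rw [hfS x hx, hfid y hy] at hxy
        exact absurd (hxy ▸ Or.inl (e ⟨x, hx⟩).2 : y ∈ S) hy
      · rw [hfid x hx, hfS y hy] at hxy
        exact absurd (hxy ▸ Or.inl (e ⟨y, hy⟩).2 : x ∈ S) hx
      · rw [hfid x hx, hfid y hy] at hxy; exact hxy
    · intro a ha
      by_cases h : a ∈ D
      · refine ⟨(e.symm ⟨a, h⟩ : ℕ), Set.mem_univ _, ?_⟩
        rw [hfS _ (e.symm ⟨a, h⟩).2]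
        simp
      · have haS : a ∉ S := by
          rw [hS, Set.mem_union, Set.mem_compl_iff]
          push_neg
          exact ⟨h, ha⟩
        exact ⟨a, Set.mem_univ _, hfid a haS⟩
  refine mem_HF_of hI f hbij ?_
  intro C hC
  constructor
  · intro hCI
    have hsub : f ⁻¹' C ⊆ S ∪ C := by
      intro x hx
      by_cases h : x ∈ S
      · exact Or.inl h
      · right; rw [Set.mem_preimage, hfid x h] at hx; exact hx
    exact hI.1 _ _ (hI.2.1 _ _ hSI hCI) hsub
  · intro hpre
    have hsub : C ⊆ D ∪ f ⁻¹' C := by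
      intro c hc
      by_cases h : c ∈ D
      · exact Or.inl h
      · have hcS : c ∉ S := by
          rw [hS, Set.mem_union, Set.mem_compl_iff]
          push_neg
          exact ⟨h, hC hc⟩
        right; rw [Set.mem_preimage, hfid c hcS]; exact hc
    exact hI.1 _ _ (hI.2.1 _ _ hDI hpre) hsub

-- Case 2a: if I = Fin (all finite sets), any A with infinite... 
lemma case2a {I : Set (Set ℕ)} (hFin : ∀ B : Set ℕ, B ∈ I ↔ B.Finite) {A : Set ℕ} (hA : A.Infinite) :
    ∃ f : ℕ → ℕ, Set.BijOn f Set.univ A ∧ ∀ C : Set ℕ, C ⊆ A → (C ∈ I ↔ f ⁻¹' C ∈ I) := by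
  have : Infinite ↥A := hA.to_subtype
  obtain ⟨d⟩ := nonempty_denumerable ↥A
  set e : ℕ ≃ ↥A := (@Denumerable.eqv _ d).symm with he
  refine ⟨fun n => (e n : ℕ), ⟨fun n _ => (e n).2, ?_, ?_⟩, ?_⟩
  · intro x _ y _ hxy
    exact e.injective (Subtype.ext hxy)
  · intro a ha
    exact ⟨e.symm ⟨a, ha⟩, Set.mem_univ _, by simp⟩
  · intro C hC
    rw [hFin, hFin]
    constructor
    · intro h
      exact h.preimage (fun x _ y _ hxy => e.injective (Subtype.ext hxy))
    · intro h
      have : C = (fun n => (e n : ℕ)) '' ((fun n => (e n : ℕ)) ⁻¹' C) := by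
        refine (Set.image_preimage_eq_of_subset ?_).symm
        intro c hc
        exact ⟨e.symm ⟨c, hC hc⟩, by simp⟩
      rw [this]
      exact h.image _

-- Case 2b: I = {B | (B ∩ A).Finite}, A infinite, Aᶜ infinite ⇒ I ≅ FinOplusAll
lemma case2b {I : Set (Set ℕ)} {A : Set ℕ} (hEq : ∀ B : Set ℕ, B ∈ I ↔ (B ∩ A).Finite)
    (hA : A.Infinite) (hAc : Aᶜ.Infinite) :
    ∃ f : Bool × ℕ → ℕ, Function.Bijective f ∧
      ∀ B : Set ℕ, B ∈ I ↔ f ⁻¹' B ∈ {A : Set (Bool × ℕ) | {n : ℕ | (true, n) ∈ A}.Finite} := by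
  classical
  have iA : Infinite ↥A := hA.to_subtype
  have iC : Infinite ↥(Aᶜ) := hAc.to_subtype
  obtain ⟨dA⟩ := nonempty_denumerable ↥A
  obtain ⟨dC⟩ := nonempty_denumerable ↥(Aᶜ)
  set eA : ℕ ≃ ↥A := (@Denumerable.eqv _ dA).symm
  set eC : ℕ ≃ ↥(Aᶜ) := (@Denumerable.eqv _ dC).symm
  refine ⟨fun p => if p.1 then (eA p.2 : ℕ) else (eC p.2 : ℕ), ⟨?_, ?_⟩, ?_⟩
  · rintro ⟨b₁, n₁⟩ ⟨b₂, n₂⟩ h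
    cases b₁ <;> cases b₂ <;> simp at h
    · exact congrArg _ (eC.injective (Subtype.ext h))
    · exact absurd ((h ▸ (eC n₁).2 : (eA n₂ : ℕ) ∈ Aᶜ)) (by simpa using (eA n₂).2)
    · exact absurd ((h.symm ▸ (eC n₂).2 : (eA n₁ : ℕ) ∈ Aᶜ)) (by simpa using (eA n₁).2)
    · exact congrArg _ (eA.injective (Subtype.ext h))
  · intro x
    by_cases h : x ∈ A
    · exact ⟨(true, eA.symm ⟨x, h⟩), by simp⟩
    · exact ⟨(false, eC.symm ⟨x, h⟩), by simp⟩
  · intro B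
    rw [hEq]
    have hset : {n : ℕ | (true, n) ∈ (fun p : Bool × ℕ => if p.1 then (eA p.2 : ℕ) else (eC p.2 : ℕ)) ⁻¹' B}
        = (fun n => (eA n : ℕ)) ⁻¹' (B ∩ A) := by
      ext n
      simp only [Set.mem_setOf_eq, Set.mem_preimage, if_true, Set.mem_inter_iff]
      exact ⟨fun h => ⟨h, (eA n).2⟩, fun h => h.1⟩
    constructor
    · intro h
      show Set.Finite _
      rw [hset]
      exact h.preimage (fun x _ y _ hxy => eA.injective (Subtype.ext hxy))
    · intro h
      have h' : ((fun n => (eA n : ℕ)) ⁻¹' (B ∩ A)).Finite := by rw [← hset]; exact h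
      have : B ∩ A = (fun n => (eA n : ℕ)) '' ((fun n => (eA n : ℕ)) ⁻¹' (B ∩ A)) := by
        refine (Set.image_preimage_eq_of_subset ?_).symm
        intro c hc
        exact ⟨eA.symm ⟨c, hc.2⟩, by simp⟩
      rw [this]
      exact h'.image _

/-- `H(I) ⊆ I⁺`, and if `I` is admissible then `I* ⊆ H(I)`. -/
theorem stmt_0 (I : Set (Set ℕ)) (hI : IsIdeal I) :
    (HF I ⊆ {A : Set ℕ | A ∉ I}) ∧
    (Admissible I → {A : Set ℕ | Aᶜ ∈ I} ⊆ HF I) := by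
  constructor
  · -- part (a): HF I ⊆ I⁺
    rintro A ⟨f, hbij, hiff⟩ hAI
    have h1 : A ∈ restr I A := (mem_restr_self hI (subset_refl A)).mpr hAI
    have h2 := (hiff A (subset_refl A)).mp h1
    have h3 : Set.univ ∩ f ⁻¹' A = Set.univ := by
      apply Set.inter_eq_left.mpr
      intro x _
      exact hbij.mapsTo (Set.mem_univ x)
    rw [h3, mem_restr_univ] at h2
    exact hI.2.2.2 h2
  · -- part (b): I* ⊆ HF I when I is admissible
    intro hAdm A hAc
    simp only [Set.mem_setOf_eq] at hAc
    have hAinf : A.Infinite := by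
      intro hfin
      apply hI.2.2.2
      rw [← Set.union_compl_self A]
      exact hI.2.1 _ _ (hI.2.2.1 A hfin) hAc
    by_cases hD : ∃ D : Set ℕ, D ⊆ A ∧ D ∈ I ∧ D.Infinite
    · obtain ⟨D, hD1, hD2, hD3⟩ := hD
      exact case1 hI hAc hD1 hD2 hD3
    · push_neg at hD
      have hEq : ∀ B : Set ℕ, B ∈ I ↔ (B ∩ A).Finite := by
        intro B
        constructor
        · intro hB
          exact hD (B ∩ A) Set.inter_subset_right (hI.1 B _ hB Set.inter_subset_left)
        · intro hfin
          have hsub : B ⊆ (B ∩ A) ∪ Aᶜ := by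
            intro x hx
            by_cases h : x ∈ A
            · exact Or.inl ⟨hx, h⟩
            · exact Or.inr h
          exact hI.1 _ _ (hI.2.1 _ _ (hI.2.2.1 _ hfin) hAc) hsub
      by_cases hAcf : Aᶜ.Finite
      · have hFin : ∀ B : Set ℕ, B ∈ I ↔ B.Finite := by
          intro B
          rw [hEq]
          constructor
          · intro h
            have hsub : B ⊆ (B ∩ A) ∪ Aᶜ := by
              intro x hx
              by_cases hxA : x ∈ A
              · exact Or.inl ⟨hx, hxA⟩
              · exact Or.inr hxA
            exact (h.union hAcf).subset hsub
          · intro h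
            exact h.subset Set.inter_subset_left
        obtain ⟨f, hbij, hiff⟩ := case2a hFin hAinf
        exact mem_HF_of hI f hbij hiff
      · exfalso
        apply hAdm
        obtain ⟨f, hbijf, hifff⟩ := case2b hEq hAinf hAcf
        exact ⟨f, hbijf, hifff⟩
end

section
/- For every ideal I on ω, the homogeneity family H(I) is closed under supersets: if A ∈ H(I) and A ⊆ B ⊆ ω, then B ∈ H(I). -/
open Set Filter

/-- the homogeneity family of any ideal is closed under supersets. -/
theorem stmt_1 (I : Set (Set ℕ)) (hI : IsIdeal I) (A B : Set ℕ)
    (hA : A ∈ HF I) (hAB : A ⊆ B) : B ∈ HF I := by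
  classical
  obtain ⟨hdown, hunion, hfin, -⟩ := hI
  -- characterization of restriction via subset-closure
  have hrestr : ∀ S C : Set ℕ, C ∈ restr I S ↔ C ⊆ S ∧ C ∈ I := by
    intro S C
    constructor
    · rintro ⟨B', hB', rfl⟩
      exact ⟨inter_subset_right, hdown B' _ hB' inter_subset_left⟩
    · rintro ⟨hCS, hCI⟩
      exact ⟨C, hCI, (inter_eq_left.mpr hCS).symm⟩
  obtain ⟨f, hfbij, hfprop⟩ := hA
  have hfinj : Function.Injective f := fun a b h => hfbij.injOn (Set.mem_univ a) (Set.mem_univ b) h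
  have hrange : Set.range f = A := by
    have := hfbij.image_eq; rwa [image_univ] at this
  have hfiso : ∀ C : Set ℕ, C ⊆ A → (C ∈ I ↔ f ⁻¹' C ∈ I) := by
    intro C hC
    have := hfprop C hC
    rw [hrestr, hrestr, univ_inter] at this
    simpa [hC] using this
  set D : Set ℕ := B \ A with hD
  set O : Set ℕ := ⋃ n, f^[n] '' D with hOdef
  have hDO : D ⊆ O := by
    intro x hx
    exact mem_iUnion.mpr ⟨0, by simpa using hx⟩
  have hOB : O ⊆ B := by
    intro x hx
    obtain ⟨n, d, hd, rfl⟩ := by simpa [hOdef] using hx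
    cases n with
    | zero => simpa using hd.1
    | succ m =>
      rw [Function.iterate_succ_apply']
      exact hAB (hrange ▸ ⟨f^[m] d, rfl⟩)
  have hOf : ∀ x, x ∈ O → f x ∈ O := by
    intro x hx
    obtain ⟨n, d, hd, rfl⟩ := by simpa [hOdef] using hx
    exact mem_iUnion.mpr ⟨n + 1, d, hd, Function.iterate_succ_apply' f n d⟩
  have hfO : ∀ x, f x ∈ O → x ∈ O := by
    intro x hx
    obtain ⟨n, d, hd, heq⟩ := by simpa [hOdef] using hx
    cases n with
    | zero =>
      exfalso
      have hfxA : f x ∈ A := hrange ▸ ⟨x, rfl⟩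
      simp only [Function.iterate_zero_apply] at heq
      rw [heq] at hd
      exact hd.2 hfxA
    | succ m =>
      rw [Function.iterate_succ_apply'] at heq
      have : f^[m] d = x := hfinj heq
      exact mem_iUnion.mpr ⟨m, d, hd, this⟩
  set g : ℕ → ℕ := fun x => if x ∈ O then x else f x with hg
  have hgO : ∀ x, x ∈ O → g x = x := fun x hx => if_pos hx
  have hgnO : ∀ x, x ∉ O → g x = f x := fun x hx => if_neg hx
  have hginj : Function.Injective g := by
    intro x y hxy
    by_cases hx : x ∈ O <;> by_cases hy : y ∈ O
    · rwa [hgO x hx, hgO y hy] at hxy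
    · rw [hgO x hx, hgnO y hy] at hxy
      exact absurd (hfO y (hxy ▸ hx)) hy
    · rw [hgnO x hx, hgO y hy] at hxy
      exact absurd (hfO x (hxy.symm ▸ hy)) hx
    · rw [hgnO x hx, hgnO y hy] at hxy
      exact hfinj hxy
  have hgmaps : Set.MapsTo g Set.univ B := by
    intro x _
    by_cases hx : x ∈ O
    · rw [hgO x hx]; exact hOB hx
    · rw [hgnO x hx]; exact hAB (hrange ▸ ⟨x, rfl⟩)
  have hgsurj : Set.SurjOn g Set.univ B := by
    intro b hb
    by_cases hbO : b ∈ O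
    · exact ⟨b, trivial, hgO b hbO⟩
    · have hbA : b ∈ A := by
        by_contra hbA
        exact hbO (hDO ⟨hb, hbA⟩)
      obtain ⟨x, rfl⟩ := hrange ▸ hbA
      have hx : x ∉ O := fun h => hbO (hOf x h)
      exact ⟨x, trivial, hgnO x hx⟩
  have hgpre : ∀ C : Set ℕ, Set.univ ∩ g ⁻¹' C = (O ∩ C) ∪ (Oᶜ ∩ f ⁻¹' C) := by
    intro C
    ext x
    by_cases hx : x ∈ O <;> simp [hg, hx]
  refine ⟨g, ⟨hgmaps, hginj.injOn, hgsurj⟩, ?_⟩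
  intro C hC
  rw [hrestr, hrestr]
  have hsplit := hgpre C
  constructor
  · rintro ⟨-, hCI⟩
    refine ⟨subset_univ _, ?_⟩
    rw [hsplit]
    apply hunion
    · exact hdown C _ hCI inter_subset_right
    · have h1 : Oᶜ ∩ f ⁻¹' C ⊆ f ⁻¹' (Oᶜ ∩ C) := by
        rintro x ⟨hxO, hxC⟩
        exact ⟨fun h => hxO (hfO x h), hxC⟩
      have h2 : Oᶜ ∩ C ∈ I := hdown C _ hCI inter_subset_right
      have h3 : Oᶜ ∩ C ⊆ A := by
        rintro x ⟨hxO, hxC⟩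
        rcases hC hxC with hxB
        by_contra hxA
        exact hxO (hDO ⟨hxB, hxA⟩)
      exact hdown _ _ ((hfiso _ h3).mp h2) h1
  · rintro ⟨-, hGI⟩
    rw [hsplit] at hGI
    refine ⟨hC, ?_⟩
    have hOC : O ∩ C ∈ I := hdown _ _ hGI subset_union_left
    have h3 : Oᶜ ∩ C ⊆ A := by
      rintro x ⟨hxO, hxC⟩
      rcases hC hxC with hxB
      by_contra hxA
      exact hxO (hDO ⟨hxB, hxA⟩)
    have h1 : f ⁻¹' (Oᶜ ∩ C) ⊆ Oᶜ ∩ f ⁻¹' C := by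
      rintro x ⟨hxO, hxC⟩
      exact ⟨fun h => hxO (hOf x h), hxC⟩
    have h2 : f ⁻¹' (Oᶜ ∩ C) ∈ I :=
      hdown _ _ (hdown _ _ hGI subset_union_right) h1
    have h4 : Oᶜ ∩ C ∈ I := (hfiso _ h3).mpr h2
    have : C = (O ∩ C) ∪ (Oᶜ ∩ C) := by
      ext x; by_cases hx : x ∈ O <;> simp [hx]
    rw [this]
    exact hunion _ _ hOC h4
end

section
/- An ideal I on ω is homogeneous if and only if for every B ∉ I there exists A ⊆ B with A ∈ H(I). -/
open Set Filter

lemma mem_restr_iff {X : Type*} {I : Set (Set X)}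
    (hdown : ∀ A B : Set X, A ∈ I → B ⊆ A → B ∈ I)
    {A C : Set X} (hCA : C ⊆ A) : C ∈ restr I A ↔ C ∈ I := by
  constructor
  · rintro ⟨D, hD, rfl⟩; exact hdown D _ hD inter_subset_left
  · intro h; exact ⟨C, h, (inter_eq_left.mpr hCA).symm⟩

/-- `I` is homogeneous iff every `B ∉ I` has a subset in `H(I)`. -/
theorem stmt_2 (I : Set (Set ℕ)) (hI : IsIdeal I) :
    HomogIdeal I ↔ ∀ B : Set ℕ, B ∉ I → ∃ A : Set ℕ, A ⊆ B ∧ A ∈ HF I := by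
  classical
  obtain ⟨hdown, hunion, hfin, huniv⟩ := hI
  constructor
  · intro hHom B hB
    refine ⟨B, subset_rfl, ?_⟩
    unfold HomogIdeal at hHom
    rw [hHom]
    exact hB
  · intro hyp
    unfold HomogIdeal
    ext A
    simp only [HF, RIso, mem_setOf_eq]
    constructor
    · rintro ⟨f, hf, hfp⟩ hA
      have h1 : A ∈ restr I A := (mem_restr_iff hdown subset_rfl).mpr hA
      have h2 := (hfp A subset_rfl).mp h1
      have h3 : (univ : Set ℕ) ∩ f ⁻¹' A = univ := by
        ext x; simp [hf.mapsTo (mem_univ x)]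
      rw [h3] at h2
      exact huniv ((mem_restr_iff hdown subset_rfl).mp h2)
    · intro hA
      obtain ⟨B, hBA, f, hf, hfp'⟩ := hyp A hA
      have finj : Function.Injective f := fun a b h => hf.injOn (mem_univ a) (mem_univ b) h
      have fmaps : ∀ x, f x ∈ B := fun x => hf.mapsTo (mem_univ x)
      have hfp : ∀ C : Set ℕ, C ⊆ B → (C ∈ I ↔ f ⁻¹' C ∈ I) := by
        intro C hC
        rw [← mem_restr_iff hdown hC, hfp' C hC, univ_inter,
          mem_restr_iff hdown (subset_univ _)]
      have fimg : ∀ D : Set ℕ, f '' D ∈ I ↔ D ∈ I := by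
        intro D
        rw [hfp _ (by rintro x ⟨y, -, rfl⟩; exact fmaps y),
          Set.preimage_image_eq D finj]
      have fpre : ∀ C : Set ℕ, C ∈ I → f ⁻¹' C ∈ I := by
        intro C hC
        have he : f ⁻¹' C = f ⁻¹' (C ∩ B) := by ext x; simp [fmaps x]
        rw [he]
        exact (hfp _ inter_subset_right).mp (hdown C _ hC inter_subset_left)
      set S : Set ℕ := ⋃ n : ℕ, f^[n] '' Aᶜ with hS
      have hAc : Aᶜ ⊆ S := fun x hx => mem_iUnion.mpr ⟨0, by simpa using hx⟩
      have hfS : ∀ x ∈ S, f x ∈ S := by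
        intro x hx
        obtain ⟨n, y, hy, rfl⟩ : ∃ n, ∃ y ∈ Aᶜ, f^[n] y = x := by
          simpa [hS, mem_iUnion] using hx
        exact mem_iUnion.mpr ⟨n + 1, y, hy, Function.iterate_succ_apply' f n y⟩
      have hSA : ∀ a ∈ S, a ∈ A → ∃ z ∈ S, f z = a := by
        intro a ha haA
        obtain ⟨n, y, hy, rfl⟩ : ∃ n, ∃ y ∈ Aᶜ, f^[n] y = a := by
          simpa [hS, mem_iUnion] using ha
        cases n with
        | zero => exact absurd haA (by simpa using hy)
        | succ m =>
          exact ⟨f^[m] y, mem_iUnion.mpr ⟨m, y, hy, rfl⟩,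
            (Function.iterate_succ_apply' f m y).symm⟩
      refine ⟨fun x => if x ∈ S then f x else x, ⟨?_, ?_, ?_⟩, ?_⟩
      · -- MapsTo
        intro x _
        by_cases hx : x ∈ S
        · simp only [hx, if_pos]
          exact hBA (fmaps x)
        · simp only [hx, if_neg, not_false_iff]
          by_contra hxA
          exact hx (hAc hxA)
      · -- InjOn
        intro x _ y _ hxy
        by_cases hx : x ∈ S <;> by_cases hy : y ∈ S <;>
          simp only [hx, hy, if_pos, if_neg, not_false_iff] at hxy
        · exact finj hxy
        · exact absurd (hxy ▸ hfS x hx) hy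
        · exact absurd (hxy.symm ▸ hfS y hy) hx
        · exact hxy
      · -- SurjOn
        intro a ha
        by_cases haS : a ∈ S
        · obtain ⟨z, hz, rfl⟩ := hSA a haS ha
          exact ⟨z, mem_univ z, if_pos hz⟩
        · exact ⟨a, mem_univ a, if_neg haS⟩
      · -- the ideal condition
        intro C hCA
        rw [mem_restr_iff hdown hCA, univ_inter, mem_restr_iff hdown (subset_univ _)]
        have hpre : (fun x => if x ∈ S then f x else x) ⁻¹' C
            = (S ∩ f ⁻¹' C) ∪ (C \ S) := by
          ext x
          by_cases hx : x ∈ S <;>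
            simp [Set.mem_preimage, hx]
        rw [hpre]
        constructor
        · intro hC
          exact hunion _ _ (hdown _ _ (fpre C hC) inter_subset_right)
            (hdown _ _ hC diff_subset)
        · intro hpC
          have h1 : S ∩ f ⁻¹' C ∈ I := hdown _ _ hpC subset_union_left
          have h2 : C \ S ∈ I := hdown _ _ hpC subset_union_right
          have h3 : C ∩ S ⊆ f '' (S ∩ f ⁻¹' C) := by
            rintro x ⟨hxC, hxS⟩
            obtain ⟨z, hz, rfl⟩ := hSA x hxS (hCA hxC)
            exact ⟨z, ⟨hz, hxC⟩, rfl⟩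
          have h4 : C ∩ S ∈ I := hdown _ _ ((fimg _).mpr h1) h3
          have : C = (C ∩ S) ∪ (C \ S) := (inter_union_diff C S).symm
          rw [this]
          exact hunion _ _ h4 h2
end

section
/- The ideal ED_fin on D = {(i,j) ∈ ω² : i ≥ j}, consisting of all A ⊆ D for which there exists m ∈ ω such that |A ∩ ({k} × ω)| ≤ m for every k ∈ ω, is homogeneous. -/
open Set Filter

/-- The set `D = {(i,j) ∈ ω² : i ≥ j}`. -/
abbrev DSet : Type := {p : ℕ × ℕ // p.2 ≤ p.1}

/-- The ideal `ED_fin` on `D`: sets whose columns have uniformly bounded size. -/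
def EDfin : Set (Set DSet) :=
  {A | ∃ m : ℕ, ∀ k : ℕ, {p : DSet | p ∈ A ∧ (p : ℕ × ℕ).1 = k}.ncard ≤ m}


namespace EDH

theorem colFin (S : Set DSet) (k : ℕ) : {p : DSet | p ∈ S ∧ (p : ℕ × ℕ).1 = k}.Finite := by
  apply Set.Finite.of_finite_image (f := fun p : DSet => (p : ℕ × ℕ).2)
  · exact Set.Finite.subset (Set.finite_Iic k) (by rintro j ⟨p, hp, rfl⟩; exact hp.2 ▸ p.2)
  · rintro p hp q hq h
    exact Subtype.ext (Prod.ext (hp.2.trans hq.2.symm) h)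

noncomputable def colA (A : Set DSet) (k : ℕ) : Finset DSet := (colFin A k).toFinset

lemma mem_colA {A : Set DSet} {k : ℕ} {p : DSet} :
    p ∈ colA A k ↔ p ∈ A ∧ (p : ℕ × ℕ).1 = k := Set.Finite.mem_toFinset _

def dmk (n : ℕ) (j : Fin (n+1)) : DSet := ⟨(n, j.1), Nat.lt_succ_iff.mp j.2⟩

noncomputable def DcolF (n : ℕ) : Finset DSet := Finset.image (dmk n) Finset.univ

lemma dmk_inj (n : ℕ) : Function.Injective (dmk n) := by
  intro a b h
  exact Fin.ext (congrArg (fun p : DSet => (p : ℕ × ℕ).2) h)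

lemma card_DcolF (n : ℕ) : (DcolF n).card = n + 1 := by
  rw [DcolF, Finset.card_image_of_injective _ (dmk_inj n), Finset.card_univ, Fintype.card_fin]

lemma mem_DcolF {n : ℕ} {p : DSet} : p ∈ DcolF n ↔ (p : ℕ × ℕ).1 = n := by
  constructor
  · intro hp
    obtain ⟨j, _, rfl⟩ := Finset.mem_image.mp hp
    rfl
  · intro hp
    refine Finset.mem_image.mpr ⟨⟨(p : ℕ × ℕ).2, by omega⟩, Finset.mem_univ _, ?_⟩
    exact Subtype.ext (Prod.ext hp.symm rfl)

structure StT where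
  uc : Finset ℕ
  up : Finset ℕ
  pc : ℕ → Finset DSet
  cm : ℕ → ℕ × ℕ
  pm : ℕ → ℕ × ℕ × ℕ

def Inv (A : Set DSet) (st : StT) : Prop :=
  (∀ s ∈ st.up, 1 ≤ s) ∧
  (∀ s ∉ st.up, st.pc s = ∅) ∧
  (∀ s ∈ st.up, (st.pc s).card = s) ∧
  (∀ s ∈ st.up, st.pc s ⊆ colA A (st.cm s).1 ∪ colA A (st.cm s).2) ∧
  (∀ k ∈ st.uc, colA A k ⊆ st.pc (st.pm k).1 ∪ st.pc (st.pm k).2.1 ∪ st.pc (st.pm k).2.2) ∧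
  (∀ s t : ℕ, s ≠ t → Disjoint (st.pc s) (st.pc t)) ∧
  (st.up.biUnion st.pc = st.uc.biUnion (colA A))

def Ext (st st' : StT) : Prop :=
  st.uc ⊆ st'.uc ∧ st.up ⊆ st'.up ∧
  (∀ s ∈ st.up, st'.pc s = st.pc s) ∧ (∀ k ∈ st.uc, st'.pm k = st.pm k)

lemma step (A : Set DSet) (hA : ∀ m : ℕ, ∃ k, m < (colA A k).card)
    (st : StT) (h : Inv A st) :
    ∃ st' : StT, Inv A st' ∧ Ext st st' ∧
      (∃ a ∈ st'.uc, a ∉ st.uc ∧ (colA A a).Nonempty ∧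
        ∀ k < a, (colA A k).Nonempty → k ∈ st.uc) ∧
      (∃ s ∈ st'.up, s ∉ st.up ∧ 1 ≤ s ∧ ∀ e < s, 1 ≤ e → e ∈ st.up) := by
  classical
  obtain ⟨h0, h1, h2, h3, h4, h5, h6⟩ := h
  -- choose a : least nonempty unused column
  have hexa : ∃ k, (colA A k).Nonempty ∧ k ∉ st.uc := by
    obtain ⟨k, hk⟩ := hA (st.uc.sup fun j => (colA A j).card)
    refine ⟨k, Finset.card_pos.mp (Nat.lt_of_le_of_lt (Nat.zero_le _) hk), fun hmem => ?_⟩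
    have hle : (colA A k).card ≤ st.uc.sup fun j => (colA A j).card :=
      Finset.le_sup (f := fun j => (colA A j).card) hmem
    omega
  obtain ⟨a, hane, hauc, ha_min⟩ :
      ∃ a, (colA A a).Nonempty ∧ a ∉ st.uc ∧ ∀ k < a, (colA A k).Nonempty → k ∈ st.uc := by
    refine ⟨Nat.find hexa, (Nat.find_spec hexa).1, (Nat.find_spec hexa).2, fun k hk hne => ?_⟩
    by_contra hkuc
    exact Nat.find_min hexa hk ⟨hne, hkuc⟩
  -- choose s : least unused piece size ≥ 1
  have hexs : ∃ s, 1 ≤ s ∧ s ∉ st.up := by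
    refine ⟨st.up.sup id + 1, by omega, fun hmem => ?_⟩
    have := Finset.le_sup (f := id) hmem
    simp only [id] at this; omega
  obtain ⟨s, hs1, hsup, hs_min⟩ :
      ∃ s, 1 ≤ s ∧ s ∉ st.up ∧ ∀ e < s, 1 ≤ e → e ∈ st.up := by
    refine ⟨Nat.find hexs, (Nat.find_spec hexs).1, (Nat.find_spec hexs).2, fun e he h1e => ?_⟩
    by_contra heup
    exact Nat.find_min hexs he ⟨h1e, heup⟩
  have hcardA : 1 ≤ (colA A a).card := Finset.card_pos.mpr hane
  have hupsum : ∀ e ∈ st.up, e ≤ st.up.sum id :=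
    fun e he => Finset.single_le_sum (f := id) (fun i _ => Nat.zero_le i) he
  obtain ⟨x, hxbig, hsx, hcAx⟩ :
      ∃ x, (∀ e ∈ st.up, e < x) ∧ s < x ∧ (colA A a).card ≤ x :=
    ⟨st.up.sum id + s + (colA A a).card + 1,
      fun e he => by have := hupsum e he; omega, by omega, by omega⟩
  have hxup : x ∉ st.up := fun hx => lt_irrefl x (hxbig x hx)
  -- choose b : big unused column
  obtain ⟨b, hbcard, hbuc, hba⟩ :
      ∃ b, s + 2*x < (colA A b).card ∧ b ∉ st.uc ∧ b ≠ a := by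
    obtain ⟨k, hk⟩ := hA (max (s + 2*x) ((insert a st.uc).sup fun j => (colA A j).card))
    have hk1 : s + 2*x < (colA A k).card := lt_of_le_of_lt (le_max_left _ _) hk
    have hk2 : (insert a st.uc).sup (fun j => (colA A j).card) < (colA A k).card :=
      lt_of_le_of_lt (le_max_right _ _) hk
    refine ⟨k, hk1, fun hmem => ?_, fun heq => ?_⟩
    · have hle : (colA A k).card ≤ (insert a st.uc).sup (fun j => (colA A j).card) :=
        Finset.le_sup (f := fun j => (colA A j).card) (Finset.mem_insert_of_mem hmem)
      omega
    · have hle : (colA A a).card ≤ (insert a st.uc).sup (fun j => (colA A j).card) :=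
        Finset.le_sup (f := fun j => (colA A j).card) (Finset.mem_insert_self a st.uc)
      rw [heq] at hk2; omega
  obtain ⟨y, hy⟩ : ∃ y, y = (colA A a).card + (colA A b).card - s - x := ⟨_, rfl⟩
  have hkey : s + x + y = (colA A a).card + (colA A b).card := by omega
  have hxy : x < y := by omega
  have hyup : y ∉ st.up := fun hy2 => by have := hxbig y hy2; omega
  have hsy : s ≠ y := by omega
  have hsx' : s ≠ x := by omega
  have hxy' : x ≠ y := by omega
  have hy1 : 1 ≤ y := by omega
  have hx1 : 1 ≤ x := by omega
  -- the two columns are disjoint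
  have hdisjcol : Disjoint (colA A a) (colA A b) := by
    rw [Finset.disjoint_left]
    intro p hp hq
    exact hba ((mem_colA.mp hq).2.symm.trans (mem_colA.mp hp).2)
  have hHcard : (colA A a ∪ colA A b).card = (colA A a).card + (colA A b).card :=
    Finset.card_union_of_disjoint hdisjcol
  -- partition into P1 P2 P3
  obtain ⟨P1, hP1H, hP1card⟩ :=
    Finset.exists_subset_card_eq (s := colA A a ∪ colA A b) (n := s) (by omega)
  obtain ⟨P2, hP2H, hP2card⟩ :=
    Finset.exists_subset_card_eq (s := (colA A a ∪ colA A b) \ P1) (n := x)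
      (by rw [Finset.card_sdiff_of_subset hP1H]; omega)
  obtain ⟨P3, hP3d⟩ : ∃ P3, P3 = ((colA A a ∪ colA A b) \ P1) \ P2 := ⟨_, rfl⟩
  have hP3card : P3.card = y := by
    rw [hP3d, Finset.card_sdiff_of_subset hP2H, Finset.card_sdiff_of_subset hP1H]; omega
  have hd21 : Disjoint P2 P1 := Finset.disjoint_of_subset_left hP2H Finset.sdiff_disjoint
  have hd31 : Disjoint P3 P1 :=
    Finset.disjoint_of_subset_left (hP3d ▸ Finset.sdiff_subset) Finset.sdiff_disjoint
  have hd32 : Disjoint P3 P2 := hP3d ▸ Finset.sdiff_disjoint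
  have hP3H : P3 ⊆ colA A a ∪ colA A b :=
    hP3d ▸ (Finset.sdiff_subset.trans Finset.sdiff_subset)
  have hP2H' : P2 ⊆ colA A a ∪ colA A b := hP2H.trans Finset.sdiff_subset
  have hUnion : P1 ∪ P2 ∪ P3 = colA A a ∪ colA A b := by
    rw [Finset.union_assoc, hP3d, Finset.union_sdiff_of_subset hP2H,
      Finset.union_sdiff_of_subset hP1H]
  -- helper facts about the new pc function
  have hpcs : (if s = s then P1 else if s = x then P2 else if s = y then P3 else st.pc s)
      = P1 := if_pos rfl
  have hpcx : (if x = s then P1 else if x = x then P2 else if x = y then P3 else st.pc x)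
      = P2 := by rw [if_neg (by omega), if_pos rfl]
  have hpcy : (if y = s then P1 else if y = x then P2 else if y = y then P3 else st.pc y)
      = P3 := by rw [if_neg (by omega), if_neg (by omega), if_pos rfl]
  have hpcold : ∀ e, e ≠ s → e ≠ x → e ≠ y →
      (if e = s then P1 else if e = x then P2 else if e = y then P3 else st.pc e) = st.pc e := by
    intro e he1 he2 he3
    rw [if_neg he1, if_neg he2, if_neg he3]
  have hpc_up : ∀ e ∈ st.up,
      (if e = s then P1 else if e = x then P2 else if e = y then P3 else st.pc e)
        = st.pc e := fun e he =>
    hpcold e (fun hh => hsup (hh ▸ he)) (fun hh => hxup (hh ▸ he)) (fun hh => hyup (hh ▸ he))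
  have hpc_mono : ∀ e, st.pc e ⊆
      (if e = s then P1 else if e = x then P2 else if e = y then P3 else st.pc e) := by
    intro e
    by_cases he1 : e = s
    · rw [if_pos he1, h1 _ (he1 ▸ hsup)]; exact Finset.empty_subset _
    rw [if_neg he1]
    by_cases he2 : e = x
    · rw [if_pos he2, h1 _ (he2 ▸ hxup)]; exact Finset.empty_subset _
    rw [if_neg he2]
    by_cases he3 : e = y
    · rw [if_pos he3, h1 _ (he3 ▸ hyup)]; exact Finset.empty_subset _
    rw [if_neg he3]
  have hHold : ∀ e, Disjoint (colA A a ∪ colA A b) (st.pc e) := by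
    intro e
    by_cases he : e ∈ st.up
    · have hsub : st.pc e ⊆ st.uc.biUnion (colA A) := by
        rw [← h6]; exact Finset.subset_biUnion_of_mem st.pc he
      rw [Finset.disjoint_right]
      intro p hp hpH
      obtain ⟨k, hkuc, hpk⟩ := Finset.mem_biUnion.mp (hsub hp)
      rcases Finset.mem_union.mp hpH with hpa | hpb
      · exact hauc (((mem_colA.mp hpk).2.symm.trans (mem_colA.mp hpa).2) ▸ hkuc)
      · exact hbuc (((mem_colA.mp hpk).2.symm.trans (mem_colA.mp hpb).2) ▸ hkuc)
    · rw [h1 e he]; exact Finset.disjoint_empty_right _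
  -- the new state
  obtain ⟨st', huc', hup', hpc', hcm', hpm'⟩ :
      ∃ st' : StT, st'.uc = insert a (insert b st.uc) ∧
        st'.up = insert s (insert x (insert y st.up)) ∧
        st'.pc = (fun e =>
          if e = s then P1 else if e = x then P2 else if e = y then P3 else st.pc e) ∧
        st'.cm = (fun e => if e = s ∨ e = x ∨ e = y then (a, b) else st.cm e) ∧
        st'.pm = (fun k => if k = a ∨ k = b then (s, x, y) else st.pm k) :=
    ⟨⟨_, _, _, _, _⟩, rfl, rfl, rfl, rfl, rfl⟩
  refine ⟨st', ⟨?_, ?_, ?_, ?_, ?_, ?_, ?_⟩, ⟨?_, ?_, ?_, ?_⟩, ?_, ?_⟩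
  -- Inv 0
  · intro e he
    rw [hup'] at he
    simp only [Finset.mem_insert] at he
    rcases he with rfl | rfl | rfl | he
    · exact hs1
    · exact hx1
    · exact hy1
    · exact h0 e he
  -- Inv 1
  · intro e he
    rw [hup'] at he
    simp only [Finset.mem_insert, not_or] at he
    obtain ⟨he1, he2, he3, he4⟩ := he
    simp only [hpc']
    rw [hpcold e he1 he2 he3]
    exact h1 e he4
  -- Inv 2
  · intro e he
    rw [hup'] at he
    simp only [Finset.mem_insert] at he
    simp only [hpc']
    rcases he with rfl | rfl | rfl | he
    · rw [hpcs, hP1card]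
    · rw [hpcx, hP2card]
    · rw [hpcy, hP3card]
    · rw [hpc_up e he]; exact h2 e he
  -- Inv 3
  · intro e he
    rw [hup'] at he
    simp only [Finset.mem_insert] at he
    simp only [hpc', hcm']
    rcases he with rfl | rfl | rfl | he
    · rw [hpcs, if_pos (Or.inl rfl)]; exact hP1H
    · rw [hpcx, if_pos (Or.inr (Or.inl rfl))]; exact hP2H'
    · rw [hpcy, if_pos (Or.inr (Or.inr rfl))]; exact hP3H
    · rw [hpc_up e he, if_neg (by push_neg; exact ⟨fun hh => hsup (hh ▸ he),
        fun hh => hxup (hh ▸ he), fun hh => hyup (hh ▸ he)⟩)]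
      exact h3 e he
  -- Inv 4
  · intro k hk
    rw [huc'] at hk
    simp only [Finset.mem_insert] at hk
    rcases hk with rfl | rfl | hk
    · have hpmk : st'.pm k = (s, x, y) := by
        simp only [hpm']; exact if_pos (Or.inl trivial)
      have e1 : st'.pc (s, x, y).1 = P1 := by
        simp only [hpc']; exact if_pos trivial
      have e2 : st'.pc (s, x, y).2.1 = P2 := by
        simp only [hpc']; rw [if_neg (by omega)]; exact if_pos trivial
      have e3 : st'.pc (s, x, y).2.2 = P3 := by
        simp only [hpc']; rw [if_neg (by omega), if_neg (by omega)]; exact if_pos trivial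
      rw [hpmk, e1, e2, e3, hUnion]
      exact Finset.subset_union_left
    · have hpmk : st'.pm k = (s, x, y) := by
        simp only [hpm']; exact if_pos (Or.inr trivial)
      have e1 : st'.pc (s, x, y).1 = P1 := by
        simp only [hpc']; exact if_pos trivial
      have e2 : st'.pc (s, x, y).2.1 = P2 := by
        simp only [hpc']; rw [if_neg (by omega)]; exact if_pos trivial
      have e3 : st'.pc (s, x, y).2.2 = P3 := by
        simp only [hpc']; rw [if_neg (by omega), if_neg (by omega)]; exact if_pos trivial
      rw [hpmk, e1, e2, e3, hUnion]
      exact Finset.subset_union_right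
    · have hpmk : st'.pm k = st.pm k := by
        simp only [hpm']
        exact if_neg (by push_neg; exact ⟨fun hh => hauc (hh ▸ hk), fun hh => hbuc (hh ▸ hk)⟩)
      rw [hpmk]
      refine (h4 k hk).trans (Finset.union_subset_union (Finset.union_subset_union ?_ ?_) ?_) <;>
        (simp only [hpc']; exact hpc_mono _)
  -- Inv 5
  · intro e f hef
    simp only [hpc']
    have hdone : ∀ g, g ≠ s → g ≠ x → g ≠ y → Disjoint (colA A a ∪ colA A b)
        (if g = s then P1 else if g = x then P2 else if g = y then P3 else st.pc g) := by
      intro g hg1 hg2 hg3; rw [hpcold g hg1 hg2 hg3]; exact hHold g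
    by_cases he1 : e = s
    · subst he1; rw [hpcs]
      by_cases hf2 : f = x
      · subst hf2; rw [hpcx]; exact hd21.symm
      by_cases hf3 : f = y
      · subst hf3; rw [hpcy]; exact hd31.symm
      · rw [hpcold f (Ne.symm hef) hf2 hf3]
        exact Finset.disjoint_of_subset_left hP1H (hHold f)
    by_cases he2 : e = x
    · subst he2; rw [hpcx]
      by_cases hf1 : f = s
      · subst hf1; rw [hpcs]; exact hd21
      by_cases hf3 : f = y
      · subst hf3; rw [hpcy]; exact hd32.symm
      · rw [hpcold f hf1 (Ne.symm hef) hf3]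
        exact Finset.disjoint_of_subset_left hP2H' (hHold f)
    by_cases he3 : e = y
    · subst he3; rw [hpcy]
      by_cases hf1 : f = s
      · subst hf1; rw [hpcs]; exact hd31
      by_cases hf2 : f = x
      · subst hf2; rw [hpcx]; exact hd32
      · rw [hpcold f hf1 hf2 (Ne.symm hef)]
        exact Finset.disjoint_of_subset_left hP3H (hHold f)
    · rw [hpcold e he1 he2 he3]
      by_cases hf1 : f = s
      · subst hf1; rw [hpcs]
        exact (Finset.disjoint_of_subset_left hP1H (hHold e)).symm
      by_cases hf2 : f = x
      · subst hf2; rw [hpcx]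
        exact (Finset.disjoint_of_subset_left hP2H' (hHold e)).symm
      by_cases hf3 : f = y
      · subst hf3; rw [hpcy]
        exact (Finset.disjoint_of_subset_left hP3H (hHold e)).symm
      · rw [hpcold f hf1 hf2 hf3]; exact h5 e f hef
  -- Inv 6
  · rw [hup', huc']
    have hcg : (st.up.biUnion fun e =>
        if e = s then P1 else if e = x then P2 else if e = y then P3 else st.pc e)
        = st.up.biUnion st.pc := Finset.biUnion_congr rfl hpc_up
    simp only [hpc']
    rw [Finset.biUnion_insert, Finset.biUnion_insert, Finset.biUnion_insert,
      Finset.biUnion_insert, Finset.biUnion_insert, hcg, h6, hpcs, hpcx, hpcy,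
      ← Finset.union_assoc P1, ← Finset.union_assoc (P1 ∪ P2), hUnion, Finset.union_assoc]
  -- Ext
  · rw [huc']; exact (Finset.subset_insert _ _).trans (Finset.subset_insert _ _)
  · rw [hup']
    exact (Finset.subset_insert _ _).trans
      ((Finset.subset_insert _ _).trans (Finset.subset_insert _ _))
  · intro e he
    simp only [hpc']
    exact hpc_up e he
  · intro k hk
    simp only [hpm']
    exact if_neg (by push_neg; exact ⟨fun hh => hauc (hh ▸ hk), fun hh => hbuc (hh ▸ hk)⟩)
  -- progress a
  · rw [huc']; exact ⟨a, Finset.mem_insert_self _ _, hauc, hane, ha_min⟩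
  -- progress s
  · rw [hup']; exact ⟨s, Finset.mem_insert_self _ _, hsup, hs1, hs_min⟩

lemma ext_rfl (st : StT) : Ext st st :=
  ⟨subset_rfl, subset_rfl, fun _ _ => rfl, fun _ _ => rfl⟩

lemma ext_trans {s1 s2 s3 : StT} (h : Ext s1 s2) (h' : Ext s2 s3) : Ext s1 s3 :=
  ⟨h.1.trans h'.1, h.2.1.trans h'.2.1,
    fun s hs => (h'.2.2.1 s (h.2.1 hs)).trans (h.2.2.1 s hs),
    fun k hk => (h'.2.2.2 k (h.1 hk)).trans (h.2.2.2 k hk)⟩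

def initSt : StT := ⟨∅, ∅, fun _ => ∅, fun _ => (0,0), fun _ => (0,0,0)⟩

lemma inv_init (A : Set DSet) : Inv A initSt :=
  ⟨fun s hs => absurd hs (Finset.notMem_empty s), fun _ _ => rfl,
    fun s hs => absurd hs (Finset.notMem_empty s),
    fun s hs => absurd hs (Finset.notMem_empty s),
    fun k hk => absurd hk (Finset.notMem_empty k),
    fun _ _ _ => Finset.disjoint_empty_left _, by simp [initSt]⟩

variable (A : Set DSet) (hA : ∀ m : ℕ, ∃ k, m < (colA A k).card)

noncomputable def chainP : ℕ → {st : StT // Inv A st} :=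
  Nat.rec ⟨initSt, inv_init A⟩
    (fun _ p => ⟨(step A hA p.1 p.2).choose, (step A hA p.1 p.2).choose_spec.1⟩)

noncomputable def chain (t : ℕ) : StT := (chainP A hA t).1

lemma chain_inv (t : ℕ) : Inv A (chain A hA t) := (chainP A hA t).2

lemma chain_step (t : ℕ) :
    Ext (chain A hA t) (chain A hA (t+1)) ∧
    (∃ a ∈ (chain A hA (t+1)).uc, a ∉ (chain A hA t).uc ∧ (colA A a).Nonempty ∧
      ∀ k < a, (colA A k).Nonempty → k ∈ (chain A hA t).uc) ∧
    (∃ s ∈ (chain A hA (t+1)).up, s ∉ (chain A hA t).up ∧ 1 ≤ s ∧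
      ∀ e < s, 1 ≤ e → e ∈ (chain A hA t).up) := by
  have h := (step A hA (chainP A hA t).1 (chainP A hA t).2).choose_spec
  exact ⟨h.2.1, h.2.2.1, h.2.2.2⟩

lemma chain_ext_le {t t' : ℕ} (h : t ≤ t') : Ext (chain A hA t) (chain A hA t') := by
  induction t', h using Nat.le_induction with
  | base => exact ext_rfl _
  | succ n hn ih => exact ext_trans ih (chain_step A hA n).1

lemma pc_stable {e t t' : ℕ} (hs : e ∈ (chain A hA t).up) (h : t ≤ t') :
    (chain A hA t').pc e = (chain A hA t).pc e :=
  (chain_ext_le A hA h).2.2.1 e hs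

lemma cols_used : ∀ K, ∃ t, ∀ k < K, (colA A k).Nonempty → k ∈ (chain A hA t).uc := by
  intro K
  induction K with
  | zero => exact ⟨0, fun k hk => absurd hk (Nat.not_lt_zero k)⟩
  | succ K ih =>
    obtain ⟨t, ht⟩ := ih
    by_cases hKe : (colA A K).Nonempty
    · by_cases hKt : K ∈ (chain A hA t).uc
      · refine ⟨t, fun k hk hne => ?_⟩
        rcases Nat.lt_succ_iff_lt_or_eq.mp hk with hk' | rfl
        · exact ht k hk' hne
        · exact hKt
      · obtain ⟨a, ha1, ha2, ha3, ha4⟩ := (chain_step A hA t).2.1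
        have haK : a = K := by
          rcases Nat.lt_trichotomy a K with h' | h' | h'
          · exact absurd (ht a h' ha3) ha2
          · exact h'
          · exact absurd (ha4 K h' hKe) hKt
        refine ⟨t + 1, fun k hk hne => ?_⟩
        rcases Nat.lt_succ_iff_lt_or_eq.mp hk with hk' | rfl
        · exact (chain_step A hA t).1.1 (ht k hk' hne)
        · exact haK ▸ ha1
    · refine ⟨t, fun k hk hne => ?_⟩
      rcases Nat.lt_succ_iff_lt_or_eq.mp hk with hk' | rfl
      · exact ht k hk' hne
      · exact absurd hne hKe

lemma pieces_used : ∀ S, ∃ t, ∀ e < S, 1 ≤ e → e ∈ (chain A hA t).up := by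
  intro S
  induction S with
  | zero => exact ⟨0, fun e he => absurd he (Nat.not_lt_zero e)⟩
  | succ S ih =>
    obtain ⟨t, ht⟩ := ih
    by_cases hS1 : 1 ≤ S
    · by_cases hSt : S ∈ (chain A hA t).up
      · refine ⟨t, fun e he h1e => ?_⟩
        rcases Nat.lt_succ_iff_lt_or_eq.mp he with he' | rfl
        · exact ht e he' h1e
        · exact hSt
      · obtain ⟨s, hs1, hs2, hs3, hs4⟩ := (chain_step A hA t).2.2
        have hsS : s = S := by
          rcases Nat.lt_trichotomy s S with h' | h' | h'
          · exact absurd (ht s h' hs3) hs2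
          · exact h'
          · exact absurd (hs4 S h' hS1) hSt
        refine ⟨t + 1, fun e he h1e => ?_⟩
        rcases Nat.lt_succ_iff_lt_or_eq.mp he with he' | rfl
        · exact (chain_step A hA t).1.2.1 (ht e he' h1e)
        · exact hsS ▸ hs1
    · refine ⟨t, fun e he h1e => ?_⟩
      rcases Nat.lt_succ_iff_lt_or_eq.mp he with he' | rfl
      · exact ht e he' h1e
      · exact absurd h1e hS1

lemma col_used (k : ℕ) (hk : (colA A k).Nonempty) : ∃ t, k ∈ (chain A hA t).uc := by
  obtain ⟨t, ht⟩ := cols_used A hA (k + 1)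
  exact ⟨t, ht k (Nat.lt_succ_self k) hk⟩

lemma piece_used (e : ℕ) (he : 1 ≤ e) : ∃ t, e ∈ (chain A hA t).up := by
  obtain ⟨t, ht⟩ := pieces_used A hA (e + 1)
  exact ⟨t, ht e (Nat.lt_succ_self e) he⟩

open Classical in
noncomputable def PL (e : ℕ) : Finset DSet :=
  if h : ∃ t, e ∈ (chain A hA t).up then (chain A hA h.choose).pc e else ∅

open Classical in
lemma PL_def (e : ℕ) : PL A hA e =
    if h : ∃ t, e ∈ (chain A hA t).up then (chain A hA h.choose).pc e else ∅ := rfl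

lemma PL_eq {e t : ℕ} (h : e ∈ (chain A hA t).up) : PL A hA e = (chain A hA t).pc e := by
  have hex : ∃ t', e ∈ (chain A hA t').up := ⟨t, h⟩
  classical
  rw [PL_def, dif_pos hex]
  rcases le_total hex.choose t with hle | hle
  · exact (pc_stable A hA hex.choose_spec hle).symm
  · exact pc_stable A hA h hle

lemma pc_le_PL (t e : ℕ) : (chain A hA t).pc e ⊆ PL A hA e := by
  by_cases h : e ∈ (chain A hA t).up
  · rw [PL_eq A hA h]
  · rw [(chain_inv A hA t).2.1 e h]
    exact Finset.empty_subset _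

lemma PL_card {e : ℕ} (he : 1 ≤ e) : (PL A hA e).card = e := by
  obtain ⟨t, ht⟩ := piece_used A hA e he
  rw [PL_eq A hA ht]
  exact (chain_inv A hA t).2.2.1 e ht

lemma PL_disj {e f : ℕ} (h : e ≠ f) : Disjoint (PL A hA e) (PL A hA f) := by
  by_cases he : ∃ t, e ∈ (chain A hA t).up
  · by_cases hf : ∃ t, f ∈ (chain A hA t).up
    · obtain ⟨t1, ht1⟩ := he
      obtain ⟨t2, ht2⟩ := hf
      rcases le_total t1 t2 with hle | hle
      · rw [PL_eq A hA ((chain_ext_le A hA hle).2.1 ht1), PL_eq A hA ht2]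
        exact (chain_inv A hA t2).2.2.2.2.2.1 e f h
      · rw [PL_eq A hA ht1, PL_eq A hA ((chain_ext_le A hA hle).2.1 ht2)]
        exact (chain_inv A hA t1).2.2.2.2.2.1 e f h
    · classical
      rw [PL_def A hA f, dif_neg hf]
      exact Finset.disjoint_empty_right _
  · classical
    rw [PL_def A hA e, dif_neg he]
    exact Finset.disjoint_empty_left _

lemma PL_two_cols {e : ℕ} (he : 1 ≤ e) :
    ∃ c1 c2, PL A hA e ⊆ colA A c1 ∪ colA A c2 := by
  obtain ⟨t, ht⟩ := piece_used A hA e he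
  rw [PL_eq A hA ht]
  exact ⟨((chain A hA t).cm e).1, ((chain A hA t).cm e).2,
    (chain_inv A hA t).2.2.2.1 e ht⟩

lemma col_three (k : ℕ) :
    ∃ e1 e2 e3, colA A k ⊆ PL A hA e1 ∪ PL A hA e2 ∪ PL A hA e3 := by
  by_cases hk : (colA A k).Nonempty
  · obtain ⟨t, ht⟩ := col_used A hA k hk
    have h4 := (chain_inv A hA t).2.2.2.2.1 k ht
    exact ⟨((chain A hA t).pm k).1, ((chain A hA t).pm k).2.1, ((chain A hA t).pm k).2.2,
      h4.trans (Finset.union_subset_union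
        (Finset.union_subset_union (pc_le_PL A hA t _) (pc_le_PL A hA t _))
        (pc_le_PL A hA t _))⟩
  · refine ⟨0, 0, 0, ?_⟩
    rw [Finset.not_nonempty_iff_eq_empty.mp hk]
    exact Finset.empty_subset _

lemma PL_sub_A {e : ℕ} {p : DSet} (hp : p ∈ PL A hA e) : p ∈ A := by
  by_cases h : ∃ t, e ∈ (chain A hA t).up
  · obtain ⟨t, ht⟩ := h
    rw [PL_eq A hA ht] at hp
    have hsub : (chain A hA t).pc e ⊆ (chain A hA t).up.biUnion (chain A hA t).pc :=
      Finset.subset_biUnion_of_mem _ ht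
    rw [(chain_inv A hA t).2.2.2.2.2.2] at hsub
    obtain ⟨k, _, hpk⟩ := Finset.mem_biUnion.mp (hsub hp)
    exact (mem_colA.mp hpk).1
  · classical
    rw [PL_def A hA e, dif_neg h] at hp
    exact absurd hp (Finset.notMem_empty p)

lemma PL_cover {p : DSet} (hp : p ∈ A) : ∃ e, 1 ≤ e ∧ p ∈ PL A hA e := by
  have hpc : p ∈ colA A ((p : ℕ × ℕ).1) := mem_colA.mpr ⟨hp, rfl⟩
  obtain ⟨t, ht⟩ := col_used A hA _ ⟨p, hpc⟩
  have hmem : p ∈ (chain A hA t).uc.biUnion (colA A) := Finset.mem_biUnion.mpr ⟨_, ht, hpc⟩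
  rw [← (chain_inv A hA t).2.2.2.2.2.2] at hmem
  obtain ⟨e, he, hpe⟩ := Finset.mem_biUnion.mp hmem
  exact ⟨e, (chain_inv A hA t).1 e he, pc_le_PL A hA t e hpe⟩

lemma PL_zero : PL A hA 0 = ∅ := by
  classical
  rw [PL_def, dif_neg]
  rintro ⟨t, ht⟩
  have := (chain_inv A hA t).1 0 ht
  omega

include hA in
lemma partition_exists :
    ∃ P : ℕ → Finset DSet,
      (∀ n, (P n).card = n + 1) ∧
      (∀ n n', n ≠ n' → Disjoint (P n) (P n')) ∧
      (∀ n p, p ∈ P n → p ∈ A) ∧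
      (∀ p, p ∈ A → ∃ n, p ∈ P n) ∧
      (∀ n, ∃ c1 c2, P n ⊆ colA A c1 ∪ colA A c2) ∧
      (∀ k, ∃ n1 n2 n3, colA A k ⊆ P n1 ∪ P n2 ∪ P n3) := by
  refine ⟨fun n => PL A hA (n + 1), fun n => PL_card A hA (by omega),
    fun n n' h => PL_disj A hA (by omega), fun n p hp => PL_sub_A A hA hp,
    fun p hp => ?_, fun n => PL_two_cols A hA (by omega), fun k => ?_⟩
  · obtain ⟨e, he1, hpe⟩ := PL_cover A hA hp
    exact ⟨e - 1, show p ∈ PL A hA (e - 1 + 1) from by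
      rw [Nat.sub_add_cancel he1]; exact hpe⟩
  · obtain ⟨e1, e2, e3, hsub⟩ := col_three A hA k
    have key : ∀ e, PL A hA e ⊆ PL A hA ((e - 1) + 1) := by
      intro e
      match e with
      | 0 => rw [PL_zero]; exact Finset.empty_subset _
      | e + 1 => exact subset_rfl
    exact ⟨e1 - 1, e2 - 1, e3 - 1, hsub.trans (Finset.union_subset_union
      (Finset.union_subset_union (key e1) (key e2)) (key e3))⟩

lemma bij_exists (P : ℕ → Finset DSet)
    (hcard : ∀ n, (P n).card = n + 1)
    (hdisj : ∀ n n', n ≠ n' → Disjoint (P n) (P n'))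
    (hsub : ∀ n p, p ∈ P n → p ∈ A)
    (hcov : ∀ p, p ∈ A → ∃ n, p ∈ P n) :
    ∃ f : DSet → DSet, Set.BijOn f Set.univ A ∧
      (∀ p : DSet, f p ∈ P ((p : ℕ × ℕ).1)) ∧
      (∀ n (q : DSet), q ∈ P n → ∃ p : DSet, (p : ℕ × ℕ).1 = n ∧ f p = q) := by
  classical
  have heq : ∀ n, (DcolF n).card = (P n).card := fun n => by rw [card_DcolF, hcard]
  set f : DSet → DSet :=
    fun p => (Finset.equivOfCardEq (heq ((p : ℕ × ℕ).1)) ⟨p, mem_DcolF.mpr rfl⟩).1 with hf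
  have hfmem : ∀ p : DSet, f p ∈ P ((p : ℕ × ℕ).1) := fun p =>
    (Finset.equivOfCardEq (heq ((p : ℕ × ℕ).1)) ⟨p, mem_DcolF.mpr rfl⟩).2
  have hsurj : ∀ n (q : DSet), q ∈ P n → ∃ p : DSet, (p : ℕ × ℕ).1 = n ∧ f p = q := by
    intro n q hq
    obtain ⟨d, hd⟩ := (Finset.equivOfCardEq (heq n)).surjective ⟨q, hq⟩
    obtain ⟨pd, hpd⟩ := d
    have hdn : (pd : ℕ × ℕ).1 = n := mem_DcolF.mp hpd
    subst hdn
    refine ⟨pd, rfl, ?_⟩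
    show ((Finset.equivOfCardEq (heq ((pd : ℕ × ℕ).1))) ⟨pd, hpd⟩ : _).1 = q
    rw [hd]
  have hinj : Function.Injective f := by
    intro p q hpq
    have hp := hfmem p
    have hq := hfmem q
    have hnm : ((p : ℕ × ℕ)).1 = ((q : ℕ × ℕ)).1 := by
      by_contra hne
      exact Finset.disjoint_left.mp (hdisj _ _ hne) hp (hpq ▸ hq)
    obtain ⟨⟨i, j⟩, hij⟩ := p
    obtain ⟨⟨i', j'⟩, hij'⟩ := q
    simp only at hnm
    subst hnm
    have := (Finset.equivOfCardEq (heq i)).injective (Subtype.ext hpq)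
    have h2 := congrArg Subtype.val this
    exact Subtype.ext (congrArg Subtype.val h2)
  refine ⟨f, ⟨fun p _ => hsub _ _ (hfmem p), fun p _ q _ h => hinj h, fun q hq => ?_⟩,
    hfmem, hsurj⟩
  obtain ⟨n, hn⟩ := hcov q hq
  obtain ⟨p, _, hfp⟩ := hsurj n q hn
  exact ⟨p, trivial, hfp⟩


lemma ncard_col (A : Set DSet) (k : ℕ) :
    {p : DSet | p ∈ A ∧ (p : ℕ × ℕ).1 = k}.ncard = (colA A k).card := by
  rw [colA, ← Set.ncard_coe_finset, Set.Finite.coe_toFinset]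


theorem isIdeal_EDfin :
    (∀ A B : Set DSet, A ∈ EDfin → B ⊆ A → B ∈ EDfin) ∧
    (∀ A B : Set DSet, A ∈ EDfin → B ∈ EDfin → A ∪ B ∈ EDfin) ∧
    (∀ A : Set DSet, A.Finite → A ∈ EDfin) ∧
    (Set.univ : Set DSet) ∉ EDfin := by
  refine ⟨?_, ?_, ?_, ?_⟩
  · rintro A B ⟨m, hm⟩ hBA
    refine ⟨m, fun k => le_trans (Set.ncard_le_ncard ?_ (colFin A k)) (hm k)⟩
    rintro p ⟨h1, h2⟩; exact ⟨hBA h1, h2⟩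
  · rintro A B ⟨m, hm⟩ ⟨m', hm'⟩
    refine ⟨m + m', fun k => ?_⟩
    have hsub : {p : DSet | p ∈ A ∪ B ∧ (p : ℕ × ℕ).1 = k} ⊆
        {p : DSet | p ∈ A ∧ (p : ℕ × ℕ).1 = k} ∪ {p : DSet | p ∈ B ∧ (p : ℕ × ℕ).1 = k} := by
      rintro p ⟨h1 | h1, h2⟩
      · exact Or.inl ⟨h1, h2⟩
      · exact Or.inr ⟨h1, h2⟩
    calc _ ≤ _ := Set.ncard_le_ncard hsub ((colFin A k).union (colFin B k))
    _ ≤ _ := Set.ncard_union_le _ _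
    _ ≤ m + m' := add_le_add (hm k) (hm' k)
  · intro A hA
    refine ⟨A.ncard, fun k => Set.ncard_le_ncard (fun p hp => hp.1) hA⟩
  · rintro ⟨m, hm⟩
    have h := hm m
    rw [ncard_col] at h
    have : DcolF m ⊆ colA Set.univ m := by
      intro p hp; exact mem_colA.mpr ⟨trivial, mem_DcolF.mp hp⟩
    have := Finset.card_le_card this
    rw [card_DcolF] at this
    omega


end EDH

/-- `ED_fin` is a homogeneous ideal. -/
theorem stmt_3 : IsIdeal EDfin ∧ HomogIdeal EDfin := by
  have hideal : IsIdeal EDfin := EDH.isIdeal_EDfin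
  refine ⟨hideal, ?_⟩
  ext A
  simp only [HF, Set.mem_setOf_eq]
  constructor
  · rintro ⟨f, hbij, hiff⟩ hA
    have hArestr : A ∈ restr EDfin A := ⟨A, hA, (Set.inter_self A).symm⟩
    obtain ⟨B, hB, hBeq⟩ := (hiff A subset_rfl).mp hArestr
    have hpre : Set.univ ∩ f ⁻¹' A = Set.univ := by
      ext p
      simp only [Set.mem_inter_iff, Set.mem_preimage, Set.mem_univ, true_and, iff_true]
      exact hbij.mapsTo (Set.mem_univ p)
    rw [Set.inter_univ] at hBeq
    have hBuniv : B = Set.univ := by rw [← hBeq, hpre]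
    exact hideal.2.2.2 (hBuniv ▸ hB)
  · intro hA
    have hApos : ∀ m : ℕ, ∃ k, m < (EDH.colA A k).card := by
      intro m
      by_contra h
      push_neg at h
      exact hA ⟨m, fun k => by rw [EDH.ncard_col]; exact h k⟩
    obtain ⟨P, hcard, hdisj, hsub, hcov, htwo, hthree⟩ := EDH.partition_exists A hApos
    obtain ⟨f, hbij, hfmem, hfsurj⟩ := EDH.bij_exists A P hcard hdisj hsub hcov
    have hinj : Function.Injective f := fun p q h =>
      hbij.injOn (Set.mem_univ p) (Set.mem_univ q) h
    refine ⟨f, hbij, ?_⟩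
    intro C hCA
    have hr1 : C ∈ restr EDfin A ↔ C ∈ EDfin := by
      constructor
      · rintro ⟨B, hB, rfl⟩
        exact hideal.1 B (B ∩ A) hB Set.inter_subset_left
      · intro hC
        exact ⟨C, hC, (Set.inter_eq_self_of_subset_left hCA).symm⟩
    have hr2 : Set.univ ∩ f ⁻¹' C ∈ restr EDfin Set.univ ↔ Set.univ ∩ f ⁻¹' C ∈ EDfin := by
      constructor
      · rintro ⟨B, hB, hBeq⟩
        rw [hBeq, Set.inter_univ]; exact hB
      · intro hD; exact ⟨_, hD, (Set.inter_univ _).symm⟩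
    rw [hr1, hr2, Set.univ_inter]
    constructor
    · rintro ⟨m, hm⟩
      refine ⟨m + m, fun n => ?_⟩
      have hsubn : f '' {p : DSet | p ∈ f ⁻¹' C ∧ (p : ℕ × ℕ).1 = n} ⊆ C ∩ ↑(P n) := by
        rintro q ⟨p, ⟨hpC, hpn⟩, rfl⟩
        exact ⟨hpC, hpn ▸ hfmem p⟩
      obtain ⟨c1, c2, htwo'⟩ := htwo n
      have hsubn2 : C ∩ ↑(P n) ⊆ {p : DSet | p ∈ C ∧ (p : ℕ × ℕ).1 = c1} ∪
          {p : DSet | p ∈ C ∧ (p : ℕ × ℕ).1 = c2} := by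
        rintro q ⟨hqC, hqP⟩
        rcases Finset.mem_union.mp (htwo' hqP) with hq | hq
        · exact Or.inl ⟨hqC, (EDH.mem_colA.mp hq).2⟩
        · exact Or.inr ⟨hqC, (EDH.mem_colA.mp hq).2⟩
      calc {p : DSet | p ∈ f ⁻¹' C ∧ (p : ℕ × ℕ).1 = n}.ncard
          = (f '' {p : DSet | p ∈ f ⁻¹' C ∧ (p : ℕ × ℕ).1 = n}).ncard :=
            (Set.ncard_image_of_injective _ hinj).symm
        _ ≤ ({p : DSet | p ∈ C ∧ (p : ℕ × ℕ).1 = c1} ∪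
              {p : DSet | p ∈ C ∧ (p : ℕ × ℕ).1 = c2}).ncard :=
            Set.ncard_le_ncard (hsubn.trans hsubn2)
              ((EDH.colFin C c1).union (EDH.colFin C c2))
        _ ≤ {p : DSet | p ∈ C ∧ (p : ℕ × ℕ).1 = c1}.ncard +
              {p : DSet | p ∈ C ∧ (p : ℕ × ℕ).1 = c2}.ncard := Set.ncard_union_le _ _
        _ ≤ m + m := add_le_add (hm c1) (hm c2)
    · rintro ⟨m, hm⟩
      refine ⟨m + m + m, fun k => ?_⟩
      have hPbound : ∀ n, (C ∩ ↑(P n)).ncard ≤ m := by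
        intro n
        have hsubim : C ∩ ↑(P n) ⊆ f '' {p : DSet | p ∈ f ⁻¹' C ∧ (p : ℕ × ℕ).1 = n} := by
          rintro q ⟨hqC, hqP⟩
          obtain ⟨p, hpn, rfl⟩ := hfsurj n q hqP
          exact ⟨p, ⟨hqC, hpn⟩, rfl⟩
        calc (C ∩ ↑(P n)).ncard
            ≤ (f '' {p : DSet | p ∈ f ⁻¹' C ∧ (p : ℕ × ℕ).1 = n}).ncard :=
              Set.ncard_le_ncard hsubim ((EDH.colFin (f ⁻¹' C) n).image f)
          _ = {p : DSet | p ∈ f ⁻¹' C ∧ (p : ℕ × ℕ).1 = n}.ncard :=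
              Set.ncard_image_of_injective _ hinj
          _ ≤ m := hm n
      obtain ⟨n1, n2, n3, hthree'⟩ := hthree k
      have hcolsub : {p : DSet | p ∈ C ∧ (p : ℕ × ℕ).1 = k} ⊆
          (C ∩ ↑(P n1)) ∪ (C ∩ ↑(P n2)) ∪ (C ∩ ↑(P n3)) := by
        rintro p ⟨hpC, hpk⟩
        have hpcol : p ∈ EDH.colA A k := EDH.mem_colA.mpr ⟨hCA hpC, hpk⟩
        rcases Finset.mem_union.mp (hthree' hpcol) with h12 | h3
        · rcases Finset.mem_union.mp h12 with h1 | h2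
          · exact Or.inl (Or.inl ⟨hpC, h1⟩)
          · exact Or.inl (Or.inr ⟨hpC, h2⟩)
        · exact Or.inr ⟨hpC, h3⟩
      have hfin1 : (C ∩ (↑(P n1) : Set DSet)).Finite := (P n1).finite_toSet.inter_of_right C
      have hfin2 : (C ∩ (↑(P n2) : Set DSet)).Finite := (P n2).finite_toSet.inter_of_right C
      have hfin3 : (C ∩ (↑(P n3) : Set DSet)).Finite := (P n3).finite_toSet.inter_of_right C
      calc {p : DSet | p ∈ C ∧ (p : ℕ × ℕ).1 = k}.ncard
          ≤ ((C ∩ ↑(P n1)) ∪ (C ∩ ↑(P n2)) ∪ (C ∩ ↑(P n3))).ncard :=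
            Set.ncard_le_ncard hcolsub ((hfin1.union hfin2).union hfin3)
        _ ≤ ((C ∩ ↑(P n1)) ∪ (C ∩ ↑(P n2))).ncard + (C ∩ ↑(P n3)).ncard :=
            Set.ncard_union_le _ _
        _ ≤ (C ∩ ↑(P n1)).ncard + (C ∩ ↑(P n2)).ncard + (C ∩ ↑(P n3)).ncard :=
            Nat.add_le_add_right (Set.ncard_union_le _ _) _
        _ ≤ m + m + m := add_le_add (add_le_add (hPbound n1) (hPbound n2)) (hPbound n3)
end

section
/- The van der Waerden ideal W = {A ⊆ ω : there exists n ∈ ω such that A contains no arithmetic progression of length n} is homogeneous. -/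
open Set Filter

/-- `A` contains an arithmetic progression of length `n`. -/
def ContainsAP (A : Set ℕ) (n : ℕ) : Prop :=
  ∃ a d : ℕ, 0 < d ∧ ∀ i < n, a + i * d ∈ A

/-- The van der Waerden ideal. -/
def vdW : Set (Set ℕ) := {A | ∃ n : ℕ, ¬ ContainsAP A n}

namespace VdWProof

/-! ### Basic facts about `ContainsAP` and `vdW` -/

lemma containsAP_mono {A : Set ℕ} {n m : ℕ} (h : n ≤ m) :
    ContainsAP A m → ContainsAP A n := by
  rintro ⟨a, d, hd, hm⟩
  exact ⟨a, d, hd, fun i hi => hm i (lt_of_lt_of_le hi h)⟩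

lemma vdW_subset {A B : Set ℕ} (hA : A ∈ vdW) (hBA : B ⊆ A) : B ∈ vdW := by
  obtain ⟨n, hn⟩ := hA
  refine ⟨n, fun hB => hn ?_⟩
  obtain ⟨a, d, hd, hm⟩ := hB
  exact ⟨a, d, hd, fun i hi => hBA (hm i hi)⟩

lemma not_mem_vdW_iff {A : Set ℕ} : A ∉ vdW ↔ ∀ n, ContainsAP A n := by
  constructor
  · intro h n
    by_contra hn
    exact h ⟨n, hn⟩
  · rintro h ⟨n, hn⟩
    exact hn (h n)

lemma univ_not_vdW : (Set.univ : Set ℕ) ∉ vdW := by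
  rw [not_mem_vdW_iff]
  intro n
  exact ⟨0, 1, one_pos, fun i _ => mem_univ _⟩

lemma vdW_finite {A : Set ℕ} (hA : A.Finite) : A ∈ vdW := by
  refine ⟨hA.toFinset.card + 1, ?_⟩
  rintro ⟨a, d, hd, hm⟩
  have hcard : (Finset.range (hA.toFinset.card + 1)).card ≤ hA.toFinset.card := by
    apply Finset.card_le_card_of_injOn (fun i => a + i * d)
    · intro i hi
      rw [Finset.mem_coe, Set.Finite.mem_toFinset]
      exact hm i (Finset.mem_range.mp hi)
    · intro i _ j _ hij
      simp only at hij
      have : i * d = j * d := by omega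
      exact Nat.eq_of_mul_eq_mul_right hd this
  rw [Finset.card_range] at hcard
  omega

/-! ### van der Waerden's theorem (finitary, two colours) from Hales–Jewett -/

lemma vdw_two_color (n : ℕ) :
    ∃ N : ℕ, ∀ χ : ℕ → Bool, ∃ a d : ℕ, 0 < d ∧ a + n * d < N ∧
      ∃ c, ∀ i < n, χ (a + i * d) = c := by
  classical
  by_contra hcon
  push_neg at hcon
  choose χ hχ using hcon
  set U : Ultrafilter ℕ := Ultrafilter.of atTop with hU
  set ψ : ℕ → Bool := fun x => decide ({N | χ N x = true} ∈ U) with hψ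
  have hS : ∀ p : ℕ, {N | χ N p = ψ p} ∈ U := by
    intro p
    by_cases hp : {N | χ N p = true} ∈ U
    · have h1 : ψ p = true := by rw [hψ]; exact decide_eq_true hp
      rw [h1]; exact hp
    · have h1 : ψ p = false := by rw [hψ]; exact decide_eq_false hp
      rw [h1]
      have h2 : {N | χ N p = false} = {N | χ N p = true}ᶜ := by
        ext N; simp
      rw [h2]
      exact Ultrafilter.compl_mem_iff_notMem.mpr hp
  obtain ⟨d, hd, b, c, hmono⟩ := Combinatorics.exists_mono_homothetic_copy (Finset.range n) ψ
  have hT : (⋂ i ∈ Finset.range n, {N | χ N (b + i * d) = ψ (b + i * d)}) ∈ U :=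
    (Filter.biInter_finset_mem _).mpr (fun i _ => hS _)
  have hT2 : {N : ℕ | b + n * d < N} ∈ U := by
    have h3 : Set.Ioi (b + n * d) ∈ (atTop : Filter ℕ) := Filter.Ioi_mem_atTop _
    have h4 := Ultrafilter.of_le (atTop : Filter ℕ) h3
    rw [← hU] at h4
    exact h4
  obtain ⟨N, hN⟩ := Filter.nonempty_of_mem (Filter.inter_mem hT hT2)
  obtain ⟨hN1, hN2⟩ := hN
  obtain ⟨i, hi, hne⟩ := hχ N b d hd hN2 c
  have h5 : χ N (b + i * d) = ψ (b + i * d) := by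
    have := Set.mem_iInter₂.mp hN1 i (Finset.mem_range.mpr hi)
    exact this
  have h6 : ψ (b + i * d) = c := by
    have := hmono i (Finset.mem_range.mpr hi)
    rw [smul_eq_mul] at this
    rwa [show d * i + b = b + i * d by ring] at this
  rw [h5, h6] at hne
  exact hne rfl

lemma vdW_union {A B : Set ℕ} (hA : A ∈ vdW) (hB : B ∈ vdW) : A ∪ B ∈ vdW := by
  classical
  obtain ⟨p, hp⟩ := hA
  obtain ⟨q, hq⟩ := hB
  obtain ⟨N, hN⟩ := vdw_two_color (p + q)
  refine ⟨N, ?_⟩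
  rintro ⟨b, e, he, hmem⟩
  obtain ⟨a, d, hd, hbound, c, hc⟩ := hN (fun x => decide (b + x * e ∈ A))
  cases c with
  | true =>
    apply hp
    apply containsAP_mono (Nat.le_add_right p q)
    refine ⟨b + a * e, d * e, Nat.mul_pos hd he, fun i hi => ?_⟩
    have h1 := hc i hi
    have h2 : b + (a + i * d) * e ∈ A := of_decide_eq_true h1
    rwa [show b + a * e + i * (d * e) = b + (a + i * d) * e by ring]
  | false =>
    apply hq
    apply containsAP_mono (Nat.le_add_left q p)
    refine ⟨b + a * e, d * e, Nat.mul_pos hd he, fun i hi => ?_⟩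
    have h1 := hc i hi
    have h2 : b + (a + i * d) * e ∉ A := of_decide_eq_false h1
    have h3 : a + i * d < N := by
      have : i * d < (p + q) * d := Nat.mul_lt_mul_of_lt_of_le hi (le_refl d) hd
      omega
    have h4 : b + (a + i * d) * e ∈ A ∪ B := hmem _ h3
    have h5 : b + (a + i * d) * e ∈ B := h4.resolve_left h2
    rwa [show b + a * e + i * (d * e) = b + (a + i * d) * e by ring]

lemma vdW_isIdeal : IsIdeal vdW := by
  refine ⟨fun A B hA hBA => vdW_subset hA hBA,
          fun A B hA hB => vdW_union hA hB,
          fun A hA => vdW_finite hA,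
          univ_not_vdW⟩

/-! ### The block map `fB` -/

/-- The map sending the dyadic interval `[2^k - 1, 2^(k+1) - 1)` affinely onto
the arithmetic progression `{aK k + i * dK k : i < 2^k}`. -/
def fB (aK dK : ℕ → ℕ) (x : ℕ) : ℕ :=
  aK (Nat.log 2 (x + 1)) + (x + 1 - 2 ^ Nat.log 2 (x + 1)) * dK (Nat.log 2 (x + 1))

lemma two_pow_pos (k : ℕ) : 0 < 2 ^ k := Nat.pow_pos (by norm_num)

lemma log_dyadic {k i : ℕ} (hi : i < 2 ^ k) : Nat.log 2 (2 ^ k - 1 + i + 1) = k := by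
  have h1 : 0 < 2 ^ k := two_pow_pos k
  have h2 : 2 ^ k - 1 + i + 1 = 2 ^ k + i := by omega
  rw [h2]
  apply Nat.log_eq_of_pow_le_of_lt_pow (Nat.le_add_right _ _)
  have h3 : 2 ^ (k + 1) = 2 ^ k * 2 := by rw [pow_succ]
  omega

lemma fB_eval (aK dK : ℕ → ℕ) {k i : ℕ} (hi : i < 2 ^ k) :
    fB aK dK (2 ^ k - 1 + i) = aK k + i * dK k := by
  have h1 : 0 < 2 ^ k := two_pow_pos k
  unfold fB
  rw [log_dyadic hi]
  congr 2
  omega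

section Build

variable {aK dK : ℕ → ℕ}

lemma fB_idx_lt (x : ℕ) : x + 1 - 2 ^ Nat.log 2 (x + 1) < 2 ^ Nat.log 2 (x + 1) := by
  have h1 : x + 1 < 2 ^ (Nat.log 2 (x + 1) + 1) := Nat.lt_pow_succ_log_self (by norm_num) _
  have h2 : 2 ^ (Nat.log 2 (x + 1) + 1) = 2 ^ Nat.log 2 (x + 1) * 2 := by rw [pow_succ]
  omega

lemma fB_pow_le (x : ℕ) : 2 ^ Nat.log 2 (x + 1) ≤ x + 1 :=
  Nat.pow_log_le_self 2 (Nat.succ_ne_zero x)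

lemma fB_lb (x : ℕ) : aK (Nat.log 2 (x + 1)) ≤ fB aK dK x :=
  Nat.le_add_right _ _

lemma fB_ub (hd : ∀ k, 0 < dK k) (x : ℕ) :
    fB aK dK x < aK (Nat.log 2 (x + 1)) + 2 ^ Nat.log 2 (x + 1) * dK (Nat.log 2 (x + 1)) := by
  unfold fB
  have h1 : (x + 1 - 2 ^ Nat.log 2 (x + 1)) * dK (Nat.log 2 (x + 1)) <
      2 ^ Nat.log 2 (x + 1) * dK (Nat.log 2 (x + 1)) :=
    Nat.mul_lt_mul_of_lt_of_le (fB_idx_lt x) (le_refl _) (hd _)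
  omega

lemma fB_inj (hd : ∀ k, 0 < dK k)
    (hgrow : ∀ j k, j < k → 2 * (aK j + 2 ^ j * dK j) < aK k) :
    Function.Injective (fB aK dK) := by
  intro x y hxy
  rcases lt_trichotomy (Nat.log 2 (x + 1)) (Nat.log 2 (y + 1)) with h | h | h
  · exfalso
    have h1 : fB aK dK x < aK (Nat.log 2 (x + 1)) + 2 ^ Nat.log 2 (x + 1) * dK (Nat.log 2 (x + 1)) :=
      fB_ub hd x
    have h2 := hgrow _ _ h
    have h3 : aK (Nat.log 2 (y + 1)) ≤ fB aK dK y := fB_lb y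
    omega
  · have h1 : fB aK dK x = aK (Nat.log 2 (x + 1)) + (x + 1 - 2 ^ Nat.log 2 (x + 1)) * dK (Nat.log 2 (x + 1)) := rfl
    have h2 : fB aK dK y = aK (Nat.log 2 (y + 1)) + (y + 1 - 2 ^ Nat.log 2 (y + 1)) * dK (Nat.log 2 (y + 1)) := rfl
    rw [h1, h2, h] at hxy
    have h3 : (x + 1 - 2 ^ Nat.log 2 (y + 1)) * dK (Nat.log 2 (y + 1)) =
        (y + 1 - 2 ^ Nat.log 2 (y + 1)) * dK (Nat.log 2 (y + 1)) := by omega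
    have h4 := Nat.eq_of_mul_eq_mul_right (hd _) h3
    have h5 : 2 ^ Nat.log 2 (x + 1) ≤ x + 1 := fB_pow_le x
    have h6 : 2 ^ Nat.log 2 (y + 1) ≤ y + 1 := fB_pow_le y
    rw [h] at h5
    omega
  · exfalso
    have h1 : fB aK dK y < aK (Nat.log 2 (y + 1)) + 2 ^ Nat.log 2 (y + 1) * dK (Nat.log 2 (y + 1)) :=
      fB_ub hd y
    have h2 := hgrow _ _ h
    have h3 : aK (Nat.log 2 (x + 1)) ≤ fB aK dK x := fB_lb x
    omega

lemma fB_mem_range_iff (y : ℕ) :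
    y ∈ Set.range (fB aK dK) ↔ ∃ k, ∃ i < 2 ^ k, y = aK k + i * dK k := by
  constructor
  · rintro ⟨x, rfl⟩
    exact ⟨Nat.log 2 (x + 1), x + 1 - 2 ^ Nat.log 2 (x + 1), fB_idx_lt x, rfl⟩
  · rintro ⟨k, i, hi, rfl⟩
    exact ⟨2 ^ k - 1 + i, fB_eval aK dK hi⟩

/-- Direction 1: if `C ⊆ range (fB)` is AP-rich, then so is its preimage. -/
lemma fB_main1 (hd : ∀ k, 0 < dK k)
    (hgrow : ∀ j k, j < k → 2 * (aK j + 2 ^ j * dK j) < aK k)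
    {C : Set ℕ} (hCr : C ⊆ Set.range (fB aK dK))
    (hC : ∀ n, ContainsAP C n) : ∀ n, ContainsAP (fB aK dK ⁻¹' C) n := by
  intro n
  obtain ⟨b, e, he, hb⟩ := hC (n + 3)
  have hrep : ∀ i, i < n + 3 → ∃ k l, l < 2 ^ k ∧ b + i * e = aK k + l * dK k := by
    intro i hi
    have := (fB_mem_range_iff (b + i * e)).mp (hCr (hb i hi))
    obtain ⟨k, l, hl, hEq⟩ := this
    exact ⟨k, l, hl, hEq⟩
  choose! kk ll hll hEq using hrep
  -- all blocks coincide for indices 1 ≤ i < n+3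
  have hstep : ∀ i, 1 ≤ i → i + 1 < n + 3 → kk i = kk (i + 1) := by
    intro i h1 hi
    by_contra hne
    have hsucc : b + (i + 1) * e = b + i * e + e := by ring
    have hie : e ≤ b + i * e := by nlinarith
    rcases lt_or_gt_of_ne hne with hlt | hgt
    · have h2 := hgrow _ _ hlt
      have hub : b + i * e < aK (kk i) + 2 ^ (kk i) * dK (kk i) := by
        rw [hEq i (by omega)]
        have : ll i * dK (kk i) < 2 ^ (kk i) * dK (kk i) :=
          Nat.mul_lt_mul_of_lt_of_le (hll i (by omega)) (le_refl _) (hd _)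
        omega
      have hlb : aK (kk (i + 1)) ≤ b + (i + 1) * e := by
        rw [hEq (i + 1) hi]
        exact Nat.le_add_right _ _
      omega
    · have h2 := hgrow _ _ hgt
      have hub : b + (i + 1) * e < aK (kk (i + 1)) + 2 ^ (kk (i + 1)) * dK (kk (i + 1)) := by
        rw [hEq (i + 1) hi]
        have : ll (i + 1) * dK (kk (i + 1)) < 2 ^ (kk (i + 1)) * dK (kk (i + 1)) :=
          Nat.mul_lt_mul_of_lt_of_le (hll (i + 1) hi) (le_refl _) (hd _)
        omega
      have hlb : aK (kk i) ≤ b + i * e := by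
        rw [hEq i (by omega)]
        exact Nat.le_add_right _ _
      omega
  have hconst : ∀ i, 1 ≤ i → i < n + 3 → kk i = kk 1 := by
    intro i
    induction i with
    | zero => omega
    | succ j IH =>
      intro h1 hi
      rcases Nat.lt_or_ge 1 (j + 1) with h | h
      · have hj1 : 1 ≤ j := by omega
        have e1 := IH hj1 (by omega)
        have e2 := hstep j hj1 (by omega)
        omega
      · have : j + 1 = 1 := by omega
        rw [this]
  -- the common block
  have hld : ∀ i, 1 ≤ i → i + 1 < n + 3 →
      ll (i + 1) * dK (kk 1) = ll i * dK (kk 1) + e := by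
    intro i h1 hi
    have e1 := hEq i (by omega)
    have e2 := hEq (i + 1) hi
    rw [hconst i h1 (by omega)] at e1
    rw [hconst (i + 1) (by omega) hi] at e2
    have hsucc : b + (i + 1) * e = b + i * e + e := by ring
    omega
  have h12 : ll 2 * dK (kk 1) = ll 1 * dK (kk 1) + e := by
    have := hld 1 (le_refl 1) (by omega)
    norm_num at this
    exact this
  have hlt12 : ll 1 < ll 2 := by
    have h0 : ll 1 * dK (kk 1) < ll 2 * dK (kk 1) := by omega
    exact lt_of_mul_lt_mul_right h0 (Nat.zero_le _)
  set q := ll 2 - ll 1 with hqdef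
  have hqpos : 0 < q := by omega
  have hq : q * dK (kk 1) = e := by
    have h0 : q * dK (kk 1) = ll 2 * dK (kk 1) - ll 1 * dK (kk 1) := by
      rw [hqdef, Nat.sub_mul]
    omega
  have hlin : ∀ j, j + 2 < n + 3 → ll (j + 1) = ll 1 + j * q := by
    intro j
    induction j with
    | zero => intro _; simp
    | succ j IH =>
      intro hj
      have h1 := IH (by omega)
      have h2 := hld (j + 1) (by omega) (by omega)
      rw [h1] at h2
      have h3 : ll (j + 1 + 1) * dK (kk 1) = (ll 1 + (j + 1) * q) * dK (kk 1) := by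
        rw [← hq] at h2
        rw [h2]; ring
      exact Nat.eq_of_mul_eq_mul_right (hd _) h3
  refine ⟨2 ^ (kk 1) - 1 + ll 1, q, hqpos, fun j hj => ?_⟩
  have hlj : ll (j + 1) = ll 1 + j * q := hlin j (by omega)
  have hjlt : ll (j + 1) < 2 ^ (kk 1) := by
    have := hll (j + 1) (by omega)
    rwa [hconst (j + 1) (by omega) (by omega)] at this
  have hxj : 2 ^ (kk 1) - 1 + ll 1 + j * q = 2 ^ (kk 1) - 1 + ll (j + 1) := by omega
  rw [Set.mem_preimage, hxj, fB_eval aK dK hjlt]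
  have e1 := hEq (j + 1) (by omega)
  rw [hconst (j + 1) (by omega) (by omega)] at e1
  rw [← e1]
  exact hb (j + 1) (by omega)

/-- Direction 2: if the preimage of `C` is AP-rich, then so is `C`. -/
lemma fB_main2 (hd : ∀ k, 0 < dK k) {C : Set ℕ}
    (hD : ∀ m, ContainsAP (fB aK dK ⁻¹' C) m) : ∀ n, ContainsAP C n := by
  intro n
  apply containsAP_mono (Nat.le_succ n)
  obtain ⟨b, e, he, hb⟩ := hD (17 * (n + 1))
  set j0 := 10 * (n + 1) with hj0def
  have hLmono : ∀ u v : ℕ, u ≤ v → Nat.log 2 (b + u * e + 1) ≤ Nat.log 2 (b + v * e + 1) := by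
    intro u v huv
    apply Nat.log_mono_right
    have : u * e ≤ v * e := Nat.mul_le_mul_right e huv
    omega
  have hex : ∃ t, t < 5 ∧
      Nat.log 2 (b + (j0 + (t + 1) * n) * e + 1) ≤ Nat.log 2 (b + (j0 + t * n) * e + 1) := by
    by_contra hcon
    push_neg at hcon
    have grow : ∀ t, t ≤ 5 →
        Nat.log 2 (b + j0 * e + 1) + t ≤ Nat.log 2 (b + (j0 + t * n) * e + 1) := by
      intro t
      induction t with
      | zero =>
        intro _
        simp
      | succ t IH =>
        intro ht
        have h1 := IH (by omega)
        have h2 := hcon t (by omega)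
        omega
    have h5 := grow 5 (le_refl 5)
    have hlow : b + j0 * e + 1 < 2 ^ (Nat.log 2 (b + j0 * e + 1) + 1) :=
      Nat.lt_pow_succ_log_self (by norm_num) _
    have hhigh : 2 ^ Nat.log 2 (b + (j0 + 5 * n) * e + 1) ≤ b + (j0 + 5 * n) * e + 1 :=
      Nat.pow_log_le_self 2 (Nat.succ_ne_zero _)
    have hpow : 2 ^ (Nat.log 2 (b + j0 * e + 1) + 5) ≤
        2 ^ Nat.log 2 (b + (j0 + 5 * n) * e + 1) :=
      Nat.pow_le_pow_right (by norm_num) h5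
    have hexp : 2 ^ (Nat.log 2 (b + j0 * e + 1) + 5) =
        16 * 2 ^ (Nat.log 2 (b + j0 * e + 1) + 1) := by
      rw [pow_add, pow_add]; ring
    have hsplit : (j0 + 5 * n) * e = j0 * e + 5 * (n * e) := by ring
    have hj0e : j0 * e = 10 * ((n + 1) * e) := by rw [hj0def]; ring
    have hne : n * e ≤ (n + 1) * e := Nat.mul_le_mul_right e (Nat.le_succ n)
    omega
  obtain ⟨t, ht5, hle⟩ := hex
  set j' := j0 + t * n with hj'def
  set κ := Nat.log 2 (b + j' * e + 1) with hκdef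
  have hKeq : ∀ i, i ≤ n → Nat.log 2 (b + (j' + i) * e + 1) = κ := by
    intro i hi
    apply le_antisymm
    · have h1 : Nat.log 2 (b + (j' + i) * e + 1) ≤ Nat.log 2 (b + (j' + n) * e + 1) :=
        hLmono _ _ (by omega)
      have h2 : j' + n = j0 + (t + 1) * n := by rw [hj'def]; ring
      rw [h2] at h1
      exact le_trans h1 hle
    · exact hLmono _ _ (by omega)
  have h2κ : 2 ^ κ ≤ b + j' * e + 1 := by
    rw [hκdef]; exact Nat.pow_log_le_self 2 (Nat.succ_ne_zero _)
  refine ⟨aK κ + (b + j' * e + 1 - 2 ^ κ) * dK κ, e * dK κ, Nat.mul_pos he (hd κ),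
    fun i hi => ?_⟩
  have hbound : j' + i < 17 * (n + 1) := by
    have : t * n ≤ 4 * n := Nat.mul_le_mul_right n (by omega)
    omega
  have hx : fB aK dK (b + (j' + i) * e) ∈ C := hb (j' + i) hbound
  have hKx : Nat.log 2 (b + (j' + i) * e + 1) = κ := hKeq i (by omega)
  have hre : (j' + i) * e = j' * e + i * e := by ring
  have hfx : fB aK dK (b + (j' + i) * e) =
      aK κ + ((b + j' * e + 1 - 2 ^ κ) + i * e) * dK κ := by
    unfold fB
    rw [hKx]
    congr 2
    omega
  have hpt : aK κ + (b + j' * e + 1 - 2 ^ κ) * dK κ + i * (e * dK κ) =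
      aK κ + ((b + j' * e + 1 - 2 ^ κ) + i * e) * dK κ := by ring
  rw [hpt, ← hfx]
  exact hx

end Build

/-! ### Cantor–Schröder–Bernstein step -/

lemma csb_step {A : Set ℕ} (f : ℕ → ℕ) (hinj : Function.Injective f)
    (hrange : Set.range f ⊆ A)
    (hpres : ∀ C : Set ℕ, C ⊆ Set.range f → (C ∈ vdW ↔ f ⁻¹' C ∈ vdW)) :
    ∃ h : ℕ → ℕ, Set.BijOn h Set.univ A ∧ ∀ C : Set ℕ, C ⊆ A → (C ∈ vdW ↔ h ⁻¹' C ∈ vdW) := by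
  classical
  set Z : Set ℕ := {x | ∃ n, x ∈ f^[n] '' Aᶜ} with hZdef
  have hAZ : Aᶜ ⊆ Z := fun x hx => ⟨0, by simpa using hx⟩
  have hfZ : ∀ x ∈ Z, f x ∈ Z := by
    rintro x ⟨n, hn⟩
    refine ⟨n + 1, ?_⟩
    rw [Function.iterate_succ']
    rw [Set.image_comp]
    exact Set.mem_image_of_mem f hn
  have hZA : ∀ y, y ∈ Z → y ∈ A → ∃ x, x ∈ Z ∧ f x = y := by
    rintro y ⟨n, hn⟩ hyA
    cases n with
    | zero =>
      simp at hn
      exact absurd hyA hn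
    | succ n =>
      rw [Function.iterate_succ', Set.image_comp] at hn
      obtain ⟨x, hx, hfx⟩ := hn
      exact ⟨x, ⟨n, hx⟩, hfx⟩
  set h : ℕ → ℕ := fun x => if x ∈ Z then f x else x with hhdef
  have hhZ : ∀ x, x ∈ Z → h x = f x := by
    intro x hx; rw [hhdef]; simp [hx]
  have hhnZ : ∀ x, x ∉ Z → h x = x := by
    intro x hx; rw [hhdef]; simp [hx]
  have hmapsto : Set.MapsTo h Set.univ A := by
    intro x _
    by_cases hx : x ∈ Z
    · rw [hhZ x hx]
      exact hrange (Set.mem_range_self x)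
    · rw [hhnZ x hx]
      by_contra hxa
      exact hx (hAZ hxa)
  have hinjOn : Set.InjOn h Set.univ := by
    intro x _ y _ hxy
    by_cases hx : x ∈ Z <;> by_cases hy : y ∈ Z
    · rw [hhZ x hx, hhZ y hy] at hxy
      exact hinj hxy
    · rw [hhZ x hx, hhnZ y hy] at hxy
      exfalso
      exact hy (hxy ▸ hfZ x hx)
    · rw [hhnZ x hx, hhZ y hy] at hxy
      exfalso
      exact hx (hxy ▸ hfZ y hy)
    · rw [hhnZ x hx, hhnZ y hy] at hxy
      exact hxy
  have hsurj : Set.SurjOn h Set.univ A := by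
    intro y hy
    by_cases hyz : y ∈ Z
    · obtain ⟨x, hxZ, hfx⟩ := hZA y hyz hy
      exact ⟨x, Set.mem_univ x, by rw [hhZ x hxZ]; exact hfx⟩
    · exact ⟨y, Set.mem_univ y, hhnZ y hyz⟩
  refine ⟨h, ⟨hmapsto, hinjOn, hsurj⟩, ?_⟩
  intro C hCA
  have hpre : h ⁻¹' C = (Z ∩ f ⁻¹' C) ∪ (Zᶜ ∩ C) := by
    ext x
    by_cases hx : x ∈ Z
    · simp [hhdef, hx]
    · simp [hhdef, hx]
  constructor
  · intro hC
    rw [hpre]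
    apply vdW_union
    · have h1 : f ⁻¹' C = f ⁻¹' (C ∩ Set.range f) := by
        ext x; simp
      have h2 : C ∩ Set.range f ∈ vdW := vdW_subset hC Set.inter_subset_left
      have h3 : f ⁻¹' (C ∩ Set.range f) ∈ vdW :=
        (hpres _ Set.inter_subset_right).mp h2
      rw [← h1] at h3
      exact vdW_subset h3 Set.inter_subset_right
    · exact vdW_subset hC Set.inter_subset_right
  · intro hC
    have hZC : Z ∩ f ⁻¹' C ∈ vdW := by
      apply vdW_subset hC
      rw [hpre]
      exact Set.subset_union_left
    have hZcC : Zᶜ ∩ C ∈ vdW := by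
      apply vdW_subset hC
      rw [hpre]
      exact Set.subset_union_right
    have hsplit : C = (C ∩ Z) ∪ (C ∩ Zᶜ) := by
      ext x; by_cases hx : x ∈ Z <;> simp [hx]
    rw [hsplit]
    apply vdW_union
    · have himg : C ∩ Z ⊆ f '' (Z ∩ f ⁻¹' C) := by
        intro y hy
        obtain ⟨x, hxZ, hfx⟩ := hZA y hy.2 (hCA hy.1)
        exact ⟨x, ⟨hxZ, by rw [Set.mem_preimage, hfx]; exact hy.1⟩, hfx⟩
      apply vdW_subset _ himg
      have h1 : f ⁻¹' (f '' (Z ∩ f ⁻¹' C)) = Z ∩ f ⁻¹' C :=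
        Set.preimage_image_eq _ hinj
      have h2 : f '' (Z ∩ f ⁻¹' C) ⊆ Set.range f := Set.image_subset_range _ _
      rw [hpres _ h2, h1]
      exact hZC
    · exact vdW_subset hZcC (by intro x hx; exact ⟨hx.2, hx.1⟩)

/-! ### Restriction lemmas -/

lemma mem_restr_iff {A C : Set ℕ} (hC : C ⊆ A) : C ∈ restr vdW A ↔ C ∈ vdW := by
  constructor
  · rintro ⟨B, hB, rfl⟩
    exact vdW_subset hB Set.inter_subset_left
  · intro h
    exact ⟨C, h, (Set.inter_eq_left.mpr hC).symm⟩

lemma mem_restr_univ_iff {C : Set ℕ} : C ∈ restr vdW Set.univ ↔ C ∈ vdW := by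
  constructor
  · rintro ⟨B, hB, rfl⟩
    rwa [Set.inter_univ]
  · intro h
    exact ⟨C, h, (Set.inter_univ C).symm⟩

/-! ### The main construction -/

lemma riso_of_not_vdW {A : Set ℕ} (hA : A ∉ vdW) : RIso vdW A Set.univ := by
  classical
  have hAP : ∀ n, ContainsAP A n := not_mem_vdW_iff.mp hA
  -- long APs beyond any bound
  have key : ∀ N L : ℕ, ∃ p : ℕ × ℕ, 0 < p.2 ∧ N < p.1 ∧ ∀ i < L, p.1 + i * p.2 ∈ A := by
    intro N L
    have hA' : (A ∩ {x | N < x}) ∉ vdW := by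
      intro h
      apply hA
      have hfin : (A ∩ {x | ¬ N < x}) ∈ vdW := by
        apply vdW_finite
        apply Set.Finite.subset (Set.finite_Iic N)
        intro x hx
        simp only [Set.mem_inter_iff, Set.mem_setOf_eq] at hx
        exact Set.mem_Iic.mpr (by omega)
      have hsub : A ⊆ (A ∩ {x | N < x}) ∪ (A ∩ {x | ¬ N < x}) := by
        intro x hx
        by_cases hxN : N < x
        · exact Or.inl ⟨hx, hxN⟩
        · exact Or.inr ⟨hx, hxN⟩
      exact vdW_subset (vdW_union h hfin) hsub
    have hAP' := not_mem_vdW_iff.mp hA'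
    cases L with
    | zero => exact ⟨(N + 1, 1), one_pos, by omega, fun i hi => absurd hi (Nat.not_lt_zero i)⟩
    | succ L =>
      obtain ⟨a, d, hdpos, hm⟩ := hAP' (L + 1)
      have h0 := hm 0 (by omega)
      simp only [Set.mem_inter_iff, Set.mem_setOf_eq, zero_mul, add_zero] at h0
      exact ⟨(a, d), hdpos, h0.2, fun i hi => (hm i hi).1⟩
  choose F hF1 hF2 hF3 using key
  let g : ℕ → ℕ × ℕ := fun k =>
    Nat.rec (F 0 (2 ^ 0)) (fun k p => F (2 * (p.1 + 2 ^ k * p.2)) (2 ^ (k + 1))) k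
  have hg0 : g 0 = F 0 (2 ^ 0) := rfl
  have hgs : ∀ k, g (k + 1) = F (2 * ((g k).1 + 2 ^ k * (g k).2)) (2 ^ (k + 1)) := fun k => rfl
  set aK : ℕ → ℕ := fun k => (g k).1 with haK
  set dK : ℕ → ℕ := fun k => (g k).2 with hdK
  have hd : ∀ k, 0 < dK k := by
    intro k
    cases k with
    | zero => exact hF1 0 (2 ^ 0)
    | succ k => exact hF1 _ _
  have hmemA : ∀ k, ∀ i < 2 ^ k, aK k + i * dK k ∈ A := by
    intro k
    cases k with
    | zero => exact hF3 0 (2 ^ 0)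
    | succ k => exact hF3 _ _
  have hgrow1 : ∀ k, 2 * (aK k + 2 ^ k * dK k) < aK (k + 1) := by
    intro k
    exact hF2 (2 * ((g k).1 + 2 ^ k * (g k).2)) (2 ^ (k + 1))
  have hgrow : ∀ j k, j < k → 2 * (aK j + 2 ^ j * dK j) < aK k := by
    intro j k hjk
    induction k with
    | zero => omega
    | succ k IH =>
      rcases Nat.lt_succ_iff_lt_or_eq.mp hjk with h | h
      · have h1 := IH h
        have h2 := hgrow1 k
        have h3 : 0 ≤ 2 ^ k * dK k := Nat.zero_le _
        omega
      · rw [h] at *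
        exact hgrow1 k
  -- the injection fB
  have hrange : Set.range (fB aK dK) ⊆ A := by
    rintro y ⟨x, rfl⟩
    have h1 : fB aK dK x = aK (Nat.log 2 (x + 1)) +
        (x + 1 - 2 ^ Nat.log 2 (x + 1)) * dK (Nat.log 2 (x + 1)) := rfl
    rw [h1]
    exact hmemA _ _ (fB_idx_lt x)
  have hpres : ∀ C : Set ℕ, C ⊆ Set.range (fB aK dK) →
      (C ∈ vdW ↔ fB aK dK ⁻¹' C ∈ vdW) := by
    intro C hCr
    constructor
    · intro hC
      by_contra hD
      have h1 := fB_main2 hd (not_mem_vdW_iff.mp hD)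
      exact (not_mem_vdW_iff.mpr h1) hC
    · intro hD
      by_contra hC
      have h1 := fB_main1 hd hgrow hCr (not_mem_vdW_iff.mp hC)
      exact (not_mem_vdW_iff.mpr h1) hD
  obtain ⟨h, hbij, hpresh⟩ := csb_step (fB aK dK) (fB_inj hd hgrow) hrange hpres
  refine ⟨h, hbij, ?_⟩
  intro C hCA
  rw [mem_restr_iff hCA]
  rw [Set.univ_inter, mem_restr_univ_iff]
  exact hpresh C hCA

lemma hf_subset_pos {A : Set ℕ} (hHF : A ∈ HF vdW) : A ∉ vdW := by
  obtain ⟨φ, hbij, hcond⟩ := hHF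
  intro hAvdW
  have h1 : A ∈ restr vdW A := ⟨A, hAvdW, (Set.inter_self A).symm⟩
  have h2 := (hcond A (subset_refl A)).mp h1
  have h3 : Set.univ ∩ φ ⁻¹' A = Set.univ := by
    apply Set.eq_univ_of_forall
    intro x
    exact ⟨Set.mem_univ x, hbij.mapsTo (Set.mem_univ x)⟩
  rw [h3] at h2
  rw [mem_restr_univ_iff] at h2
  exact univ_not_vdW h2

end VdWProof

/-- the van der Waerden ideal is a homogeneous ideal. -/
theorem stmt_4 : IsIdeal vdW ∧ HomogIdeal vdW := by
  constructor
  · exact VdWProof.vdW_isIdeal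
  · apply Set.ext
    intro A
    constructor
    · intro hHF
      exact VdWProof.hf_subset_pos hHF
    · intro hA
      exact VdWProof.riso_of_not_vdW hA
end
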